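/- arXiv:2205.12212 — 2 statements merged into one kernel-verified Lean document; each statement's English description precedes it below -/
import Mathlib

section
/- Trilinear discrete sum bound for admissible envelopes: For every A ≥ 1 there exists a constant C = C(A) such that the following holds. Let c : ℤ → [0,∞) be square-summable and satisfy the maximal property (Mc)_k ≤ A·c_k for all k ∈ ℤ. Then for every k₁ ∈ ℤ, Σ_{(k₂,k₃,k₄) ∈ ℤ³} ⟨δk^hi⟩^{-1} ⟨δk^med⟩^{-1} c_{k₂} c_{k₃} c_{k₄} ≤ C · ‖c‖²_{ℓ²(ℤ)} · c_{k₁}, where for each quadruple (k₁,k₂,k₃,k₄) one sets δk^hi = max{|k₁−k₂|+|k₃−k₄|, |k₁−k₄|+|k₃−k₂|} and δk^med = min{|k₁−k₂|+|k₃−k₄|, |k₁−k₄|+|k₃−k₂|}. -/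
noncomputable section

/-- `δk^hi = max{|k₁−k₂|+|k₃−k₄|, |k₁−k₄|+|k₃−k₂|}` for integer frequencies. -/
def δhiZ (k1 k2 k3 k4 : ℤ) : ℝ :=
  max ((|k1 - k2| + |k3 - k4| : ℤ) : ℝ) ((|k1 - k4| + |k3 - k2| : ℤ) : ℝ)

/-- `δk^med = min{|k₁−k₂|+|k₃−k₄|, |k₁−k₄|+|k₃−k₂|}` for integer frequencies. -/
def δmedZ (k1 k2 k3 k4 : ℤ) : ℝ :=
  min ((|k1 - k2| + |k3 - k4| : ℤ) : ℝ) ((|k1 - k4| + |k3 - k2| : ℤ) : ℝ)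

open Finset
open scoped ENNReal


lemma sqrt_tel1 {x : ℝ} (hx : 0 ≤ x) :
    (Real.sqrt (1 + x))⁻¹ ≤ 2 * (Real.sqrt (x + 1) - Real.sqrt x) := by
  have h1 : Real.sqrt (1 + x) = Real.sqrt (x + 1) := by rw [add_comm]
  rw [h1]
  set s := Real.sqrt (x + 1) with hs
  set t := Real.sqrt x with htd
  have hs0 : 0 < s := Real.sqrt_pos.mpr (by linarith)
  have ht0 : 0 ≤ t := Real.sqrt_nonneg x
  have hs2 : s ^ 2 = x + 1 := Real.sq_sqrt (by linarith)
  have ht2 : t ^ 2 = x := Real.sq_sqrt hx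
  rw [inv_le_iff_one_le_mul₀ hs0]
  nlinarith [sq_nonneg (s - t)]

lemma sqrt_tel32 {x : ℝ} (hx : 0 ≤ x) :
    ((1 + x) * Real.sqrt (1 + x))⁻¹ ≤
      4 * ((Real.sqrt (1 + x))⁻¹ - (Real.sqrt (2 + x))⁻¹) := by
  set u := Real.sqrt (1 + x) with hu
  set v := Real.sqrt (2 + x) with hv
  have hu0 : 0 < u := Real.sqrt_pos.mpr (by linarith)
  have hv0 : 0 < v := Real.sqrt_pos.mpr (by linarith)
  have hu2 : u ^ 2 = 1 + x := Real.sq_sqrt (by linarith)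
  have hv2 : v ^ 2 = 2 + x := Real.sq_sqrt (by linarith)
  have huv : u ≤ v := Real.sqrt_le_sqrt (by linarith)
  have hu1 : 1 ≤ u := by
    have h := Real.sqrt_le_sqrt (show (1:ℝ) ≤ 1 + x by linarith)
    rwa [Real.sqrt_one] at h
  have hvu : (v - u) * (v + u) = 1 := by nlinarith
  have key : 4 * ((u)⁻¹ - (v)⁻¹) - ((1+x) * u)⁻¹ = (4*(v-u)*u^2 - v) / (u^2 * u * v) := by
    rw [← hu2]
    field_simp
  rw [← sub_nonneg, key]
  apply div_nonneg _ (by positivity)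
  have hv2u : v^2 ≤ 2*u^2 := by nlinarith
  have huv2 : u*v ≤ v^2 := by nlinarith
  have h4 : (4*(v-u)*u^2 - v)*(v+u) = 4*u^2*((v-u)*(v+u)) - v^2 - u*v := by ring
  rw [hvu] at h4
  nlinarith [add_pos hu0 hv0]

lemma amgm_inv {t u : ℝ} (ht : 0 < t) (hu : 0 < u) :
    u⁻¹ ≤ t * (u ^ 2)⁻¹ / 2 + (2 * t)⁻¹ := by
  rw [← sub_nonneg]
  have key : t * (u ^ 2)⁻¹ / 2 + (2 * t)⁻¹ - u⁻¹ = (t - u)^2 / (2 * t * u^2) := by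
    field_simp
    ring
  rw [key]
  positivity

/-- telescoping bound for finite sums over naturals. -/
lemma tel_sum {τ : ℕ → ℝ} {g : ℕ → ℝ} (hg0 : ∀ n, 0 ≤ g n)
    (hgτ : ∀ n, g n ≤ τ n - τ (n + 1)) (hτ0 : ∀ n, 0 ≤ τ n)
    (n₀ : ℕ) (G : Finset ℕ) (hG : ∀ n ∈ G, n₀ ≤ n) :
    ∑ n ∈ G, g n ≤ τ n₀ := by
  classical
  set K := max (G.sup id + 1) n₀ with hK
  have hn₀K : n₀ ≤ K := le_max_right _ _
  have hsub : G ⊆ Finset.Ico n₀ K := by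
    intro n hn
    simp only [Finset.mem_Ico]
    refine ⟨hG n hn, ?_⟩
    have : n ≤ G.sup id := Finset.le_sup (f := id) hn
    omega
  have h1 : ∑ n ∈ G, g n ≤ ∑ n ∈ Finset.Ico n₀ K, g n :=
    Finset.sum_le_sum_of_subset_of_nonneg hsub (fun i _ _ => hg0 i)
  have h2 : ∑ n ∈ Finset.Ico n₀ K, g n ≤ ∑ n ∈ Finset.Ico n₀ K, (τ n - τ (n + 1)) :=
    Finset.sum_le_sum (fun i _ => hgτ i)
  have h3 : ∑ n ∈ Finset.Ico n₀ K, (τ n - τ (n + 1)) = τ n₀ - τ K := by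
    rw [Finset.sum_Ico_eq_sub _ hn₀K, Finset.sum_range_sub' τ, Finset.sum_range_sub' τ]
    ring
  have := hτ0 K
  linarith

/-- partial sums of `1/√(1+j)`. -/
lemma natsum_inv_sqrt (N : ℕ) (G : Finset ℕ) (hG : ∀ j ∈ G, j ≤ N) :
    ∑ j ∈ G, (Real.sqrt (1 + (j:ℝ)))⁻¹ ≤ 2 * Real.sqrt (1 + (N:ℝ)) := by
  have h1 : ∑ j ∈ G, (Real.sqrt (1 + (j:ℝ)))⁻¹ ≤
      ∑ j ∈ Finset.range (N+1), (Real.sqrt (1 + (j:ℝ)))⁻¹ := by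
    apply Finset.sum_le_sum_of_subset_of_nonneg
    · intro j hj; simp only [Finset.mem_range]; exact Nat.lt_succ_of_le (hG j hj)
    · intro i _ _; positivity
  have h2 : ∑ j ∈ Finset.range (N+1), (Real.sqrt (1 + (j:ℝ)))⁻¹ ≤
      ∑ j ∈ Finset.range (N+1), ((fun i : ℕ => 2 * Real.sqrt (i:ℝ)) (j+1)
        - (fun i : ℕ => 2 * Real.sqrt (i:ℝ)) j) := by
    apply Finset.sum_le_sum
    intro i _
    have := sqrt_tel1 (x := (i:ℝ)) (by positivity)
    simp only [Nat.cast_add, Nat.cast_one]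
    linarith
  rw [Finset.sum_range_sub (fun i : ℕ => 2 * Real.sqrt (i:ℝ))] at h2
  simp only [Nat.cast_zero, Real.sqrt_zero, mul_zero, sub_zero, Nat.cast_add,
    Nat.cast_one] at h2
  have h3 : Real.sqrt ((N:ℝ) + 1) = Real.sqrt (1 + (N:ℝ)) := by rw [add_comm]
  rw [h3] at h2
  linarith

/-- tail sums of `(1+j)^{-3/2}`. -/
lemma natsum_tail32 (N : ℕ) (G : Finset ℕ) (hG : ∀ j ∈ G, N < j) :
    ∑ j ∈ G, ((1 + (j:ℝ)) * Real.sqrt (1 + (j:ℝ)))⁻¹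
      ≤ 4 * (Real.sqrt (1 + (N:ℝ)))⁻¹ := by
  have key : ∑ j ∈ G, ((1 + (j:ℝ)) * Real.sqrt (1 + (j:ℝ)))⁻¹
      ≤ 4 * (Real.sqrt (1 + ((N+1:ℕ):ℝ)))⁻¹ := by
    apply tel_sum (τ := fun n => 4 * (Real.sqrt (1 + (n:ℝ)))⁻¹)
    · intro n; positivity
    · intro n
      have := sqrt_tel32 (x := (n:ℝ)) (by positivity)
      push_cast
      have e : (2:ℝ) + (n:ℝ) = 1 + ((n:ℝ)+1) := by ring
      rw [e] at this
      linarith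
    · intro n; positivity
    · exact fun n hn => hG n hn
  refine le_trans key ?_
  have : Real.sqrt (1 + (N:ℝ)) ≤ Real.sqrt (1 + ((N+1:ℕ):ℝ)) := by
    apply Real.sqrt_le_sqrt; push_cast; linarith
  have h2 : (Real.sqrt (1 + ((N+1:ℕ):ℝ)))⁻¹ ≤ (Real.sqrt (1 + (N:ℝ)))⁻¹ := by
    apply inv_anti₀ (Real.sqrt_pos.mpr (by positivity)) this
  linarith

/-- tail sums of `(1+j)^{-2}`. -/
lemma natsum_tail2 (N : ℕ) (G : Finset ℕ) (hG : ∀ j ∈ G, N < j) :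
    ∑ j ∈ G, (((1 + (j:ℝ))^2))⁻¹ ≤ 2 * (1 + (N:ℝ))⁻¹ := by
  have key : ∑ j ∈ G, (((1 + (j:ℝ))^2))⁻¹ ≤ 2 * (1 + ((N+1:ℕ):ℝ))⁻¹ := by
    apply tel_sum (τ := fun n => 2 * (1 + (n:ℝ))⁻¹)
    · intro n; positivity
    · intro n
      rw [← sub_nonneg]
      have e : 2 * (1 + (n:ℝ))⁻¹ - 2 * (1 + ((n+1:ℕ):ℝ))⁻¹ - ((1 + (n:ℝ))^2)⁻¹
          = ((n:ℝ)) / ((1+(n:ℝ))^2 * (2+(n:ℝ))) := by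
        push_cast
        field_simp
        ring
      rw [e]
      positivity
    · intro n; positivity
    · exact fun n hn => hG n hn
  refine le_trans key ?_
  have h2 : (1 + ((N+1:ℕ):ℝ))⁻¹ ≤ (1 + (N:ℝ))⁻¹ := by
    apply inv_anti₀ (by positivity) (by push_cast; linarith)
  linarith

/-- the `j`-sum in the maximal-function weighted bound. -/
lemma natsum_R (R : ℝ) (hR : 0 ≤ R) (G : Finset ℕ) :
    ∑ j ∈ G, (2*(j:ℝ)+1) * (((1+R+(j:ℝ))^3))⁻¹ ≤ 4 * (1+R)⁻¹ := by
  have key : ∑ j ∈ G, (2*(j:ℝ)+1) * (((1+R+(j:ℝ))^3))⁻¹ ≤ 4 * (1+R+((0:ℕ):ℝ))⁻¹ := by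
    apply tel_sum (τ := fun n => 4 * (1 + R + (n:ℝ))⁻¹)
    · intro n; positivity
    · intro n
      rw [← sub_nonneg]
      have e : 4 * (1+R+(n:ℝ))⁻¹ - 4 * (1+R+((n+1:ℕ):ℝ))⁻¹ - (2*(n:ℝ)+1) * ((1+R+(n:ℝ))^3)⁻¹
          = (4*(1+R+(n:ℝ))^2 - (2*(n:ℝ)+1)*(2+R+(n:ℝ))) / ((1+R+(n:ℝ))^3 * (2+R+(n:ℝ))) := by
        push_cast
        field_simp
        ring
      rw [e]
      apply div_nonneg _ (by positivity)
      nlinarith [sq_nonneg (n:ℝ), (by positivity : (0:ℝ) ≤ (n:ℝ))]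
    · intro n; positivity
    · exact fun n _ => Nat.zero_le n
  simpa using key

/-- summing over `ℤ` a function of `natAbs` is at most twice the sum over the image. -/
lemma int_sum_natAbs (w : ℕ → ℝ) (hw : ∀ n, 0 ≤ w n) (F : Finset ℤ) :
    ∑ y ∈ F, w y.natAbs ≤ 2 * ∑ j ∈ F.image Int.natAbs, w j := by
  classical
  rw [← Finset.sum_fiberwise_of_maps_to (g := Int.natAbs)
    (fun x hx => Finset.mem_image_of_mem _ hx) (fun y => w y.natAbs)]
  rw [Finset.mul_sum]
  apply Finset.sum_le_sum
  intro j _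
  have h1 : ∑ x ∈ F.filter (fun x => x.natAbs = j), w x.natAbs
      = ∑ x ∈ F.filter (fun x => x.natAbs = j), w j := by
    apply Finset.sum_congr rfl
    intro x hx
    rw [(Finset.mem_filter.mp hx).2]
  rw [h1, Finset.sum_const]
  have hcard : (F.filter (fun x => x.natAbs = j)).card ≤ 2 := by
    have hsub : F.filter (fun x => x.natAbs = j) ⊆ {(j:ℤ), -(j:ℤ)} := by
      intro x hx
      have := (Finset.mem_filter.mp hx).2
      simp only [Finset.mem_insert, Finset.mem_singleton]
      omega
    calc (F.filter (fun x => x.natAbs = j)).card ≤ ({(j:ℤ), -(j:ℤ)} : Finset ℤ).card :=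
          Finset.card_le_card hsub
      _ ≤ 2 := Finset.card_insert_le _ _ |>.trans (by simp)
  calc (F.filter (fun x => x.natAbs = j)).card • w j
      ≤ 2 * w j := by
        rw [nsmul_eq_mul]
        exact mul_le_mul_of_nonneg_right (by exact_mod_cast hcard) (hw j)

def na (x : ℤ) : ℝ := (x.natAbs : ℝ)
def ab (x : ℤ) : ℝ := 1 + na x

lemma na_nonneg (x : ℤ) : 0 ≤ na x := Nat.cast_nonneg _
lemma ab_pos (x : ℤ) : 0 < ab x := by have := na_nonneg x; unfold ab; linarith
lemma ab_one_le (x : ℤ) : 1 ≤ ab x := by have := na_nonneg x; unfold ab; linarith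

/-- Z1 -/
lemma zsum_inv_sqrt (N : ℕ) (F : Finset ℤ) (hF : ∀ y ∈ F, y.natAbs ≤ N) :
    ∑ y ∈ F, (Real.sqrt (ab y))⁻¹ ≤ 4 * Real.sqrt (1 + (N:ℝ)) := by
  have h := int_sum_natAbs (fun n => (Real.sqrt (1 + (n:ℝ)))⁻¹) (fun n => by positivity) F
  have h2 : ∑ j ∈ F.image Int.natAbs, (Real.sqrt (1 + (j:ℝ)))⁻¹ ≤ 2 * Real.sqrt (1 + (N:ℝ)) := by
    apply natsum_inv_sqrt
    intro j hj
    obtain ⟨y, hy, rfl⟩ := Finset.mem_image.mp hj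
    exact hF y hy
  unfold ab na
  calc ∑ y ∈ F, (Real.sqrt (1 + (y.natAbs:ℝ)))⁻¹
      ≤ 2 * ∑ j ∈ F.image Int.natAbs, (Real.sqrt (1 + (j:ℝ)))⁻¹ := h
    _ ≤ 2 * (2 * Real.sqrt (1 + (N:ℝ))) := by linarith
    _ = 4 * Real.sqrt (1 + (N:ℝ)) := by ring

/-- Z2 -/
lemma zsum_tail32 (N : ℕ) (F : Finset ℤ) (hF : ∀ y ∈ F, N < y.natAbs) :
    ∑ y ∈ F, (ab y * Real.sqrt (ab y))⁻¹ ≤ 8 * (Real.sqrt (1 + (N:ℝ)))⁻¹ := by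
  have h := int_sum_natAbs (fun n => ((1 + (n:ℝ)) * Real.sqrt (1 + (n:ℝ)))⁻¹)
    (fun n => by positivity) F
  have h2 := natsum_tail32 N (F.image Int.natAbs) (by
    intro j hj
    obtain ⟨y, hy, rfl⟩ := Finset.mem_image.mp hj
    exact hF y hy)
  unfold ab na
  calc ∑ y ∈ F, ((1 + (y.natAbs:ℝ)) * Real.sqrt (1 + (y.natAbs:ℝ)))⁻¹
      ≤ 2 * ∑ j ∈ F.image Int.natAbs, ((1 + (j:ℝ)) * Real.sqrt (1 + (j:ℝ)))⁻¹ := h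
    _ ≤ 2 * (4 * (Real.sqrt (1 + (N:ℝ)))⁻¹) := by linarith
    _ = 8 * (Real.sqrt (1 + (N:ℝ)))⁻¹ := by ring

/-- Z3 -/
lemma zsum_tail2 (N : ℕ) (F : Finset ℤ) (hF : ∀ y ∈ F, N < y.natAbs) :
    ∑ y ∈ F, ((ab y)^2)⁻¹ ≤ 4 * (1 + (N:ℝ))⁻¹ := by
  have h := int_sum_natAbs (fun n => ((1 + (n:ℝ))^2)⁻¹) (fun n => by positivity) F
  have h2 := natsum_tail2 N (F.image Int.natAbs) (by
    intro j hj
    obtain ⟨y, hy, rfl⟩ := Finset.mem_image.mp hj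
    exact hF y hy)
  unfold ab na
  calc ∑ y ∈ F, ((1 + (y.natAbs:ℝ))^2)⁻¹
      ≤ 2 * ∑ j ∈ F.image Int.natAbs, ((1 + (j:ℝ))^2)⁻¹ := h
    _ ≤ 2 * (2 * (1 + (N:ℝ))⁻¹) := by linarith
    _ = 4 * (1 + (N:ℝ))⁻¹ := by ring

/-- Z4 : cardinality bound -/
lemma zcard (N : ℕ) (F : Finset ℤ) (hF : ∀ y ∈ F, y.natAbs ≤ N) :
    (F.card : ℝ) ≤ 2 * (N:ℝ) + 1 := by
  have hsub : F ⊆ Finset.Icc (-(N:ℤ)) (N:ℤ) := by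
    intro x hx
    have := hF x hx
    simp only [Finset.mem_Icc]
    omega
  have := Finset.card_le_card hsub
  rw [Int.card_Icc] at this
  have h2 : ((N:ℤ) + 1 - -(N:ℤ)).toNat = 2*N+1 := by omega
  rw [h2] at this
  exact_mod_cast this

lemma ab_def (x : ℤ) : ab x = 1 + (x.natAbs : ℝ) := rfl

lemma inv_sqrt_helper {a : ℝ} (ha : 0 < a) : a⁻¹ * Real.sqrt a = (Real.sqrt a)⁻¹ := by
  have hs : 0 < Real.sqrt a := Real.sqrt_pos.mpr ha
  have h : Real.sqrt a * Real.sqrt a = a := Real.mul_self_sqrt ha.le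
  field_simp
  exact Real.sq_sqrt ha.le

lemma inv_sqrt_cancel {a : ℝ} (ha : 0 < a) : (Real.sqrt a)⁻¹ * Real.sqrt a = 1 := by
  have hs : 0 < Real.sqrt a := Real.sqrt_pos.mpr ha
  field_simp

lemma inv_sqrt_le_c {c a b : ℝ} (ha : 0 < a) (hb : 0 < b) (h : a ≤ c * b) :
    (Real.sqrt b)⁻¹ ≤ Real.sqrt c * (Real.sqrt a)⁻¹ := by
  have hc : 0 < c := by
    by_contra hcon
    push_neg at hcon
    nlinarith
  have h1 : Real.sqrt a ≤ Real.sqrt c * Real.sqrt b := by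
    rw [← Real.sqrt_mul hc.le]
    exact Real.sqrt_le_sqrt h
  have hsa : 0 < Real.sqrt a := Real.sqrt_pos.mpr ha
  have hsb : 0 < Real.sqrt b := Real.sqrt_pos.mpr hb
  have hsc : 0 < Real.sqrt c := Real.sqrt_pos.mpr hc
  rw [← sub_nonneg]
  have key : Real.sqrt c * (Real.sqrt a)⁻¹ - (Real.sqrt b)⁻¹
      = (Real.sqrt c * Real.sqrt b - Real.sqrt a) / (Real.sqrt a * Real.sqrt b) := by
    field_simp
  rw [key]
  apply div_nonneg _ (by positivity)
  linarith

lemma sqrt2_le : Real.sqrt 2 ≤ 1.5 := by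
  rw [show (1.5:ℝ) = Real.sqrt (1.5^2) by rw [Real.sqrt_sq]; norm_num]
  exact Real.sqrt_le_sqrt (by norm_num)

lemma sqrt3_le : Real.sqrt 3 ≤ 1.8 := by
  rw [show (1.8:ℝ) = Real.sqrt (1.8^2) by rw [Real.sqrt_sq]; norm_num]
  exact Real.sqrt_le_sqrt (by norm_num)

lemma ab_le_two {u v : ℤ} (h : u.natAbs ≤ 2 * v.natAbs) : ab u ≤ 2 * ab v := by
  unfold ab na
  have : (u.natAbs:ℝ) ≤ 2*(v.natAbs:ℝ) := by exact_mod_cast h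
  linarith

lemma ab_le_three {u v : ℤ} (h : u.natAbs ≤ 3 * v.natAbs) : ab u ≤ 3 * ab v := by
  unfold ab na
  have : (u.natAbs:ℝ) ≤ 3*(v.natAbs:ℝ) := by exact_mod_cast h
  linarith

/-- Schur row bound R1 : `Σ_y (1+|x|+|y|)⁻¹ (1+|y|)^{-1/2} ≤ 12 (1+|x|)^{-1/2}`. -/
lemma rowR1 (x : ℤ) (F : Finset ℤ) :
    ∑ y ∈ F, (ab x + na y)⁻¹ * (Real.sqrt (ab y))⁻¹ ≤ 12 * (Real.sqrt (ab x))⁻¹ := by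
  classical
  have hax := ab_pos x
  have hsx : 0 < Real.sqrt (ab x) := Real.sqrt_pos.mpr hax
  rw [← Finset.sum_filter_add_sum_filter_not F (fun y => y.natAbs ≤ x.natAbs)]
  have p1 : ∑ y ∈ F.filter (fun y => y.natAbs ≤ x.natAbs),
      (ab x + na y)⁻¹ * (Real.sqrt (ab y))⁻¹ ≤ 4 * (Real.sqrt (ab x))⁻¹ := by
    have step1 : ∑ y ∈ F.filter (fun y => y.natAbs ≤ x.natAbs),
        (ab x + na y)⁻¹ * (Real.sqrt (ab y))⁻¹
        ≤ ∑ y ∈ F.filter (fun y => y.natAbs ≤ x.natAbs), (ab x)⁻¹ * (Real.sqrt (ab y))⁻¹ := by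
      apply Finset.sum_le_sum
      intro y _
      apply mul_le_mul_of_nonneg_right _ (by positivity)
      apply inv_anti₀ hax (by have := na_nonneg y; linarith)
    have step3 : ∑ y ∈ F.filter (fun y => y.natAbs ≤ x.natAbs), (Real.sqrt (ab y))⁻¹
        ≤ 4 * Real.sqrt (1 + (x.natAbs : ℝ)) := by
      apply zsum_inv_sqrt
      intro y hy
      exact (Finset.mem_filter.mp hy).2
    rw [← ab_def] at step3
    calc ∑ y ∈ F.filter (fun y => y.natAbs ≤ x.natAbs),
        (ab x + na y)⁻¹ * (Real.sqrt (ab y))⁻¹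
        ≤ (ab x)⁻¹ * ∑ y ∈ F.filter (fun y => y.natAbs ≤ x.natAbs), (Real.sqrt (ab y))⁻¹ := by
          rw [Finset.mul_sum]; exact step1
      _ ≤ (ab x)⁻¹ * (4 * Real.sqrt (ab x)) := by
          apply mul_le_mul_of_nonneg_left step3 (by positivity)
      _ = 4 * ((ab x)⁻¹ * Real.sqrt (ab x)) := by ring
      _ = 4 * (Real.sqrt (ab x))⁻¹ := by rw [inv_sqrt_helper hax]
  have p2 : ∑ y ∈ F.filter (fun y => ¬ y.natAbs ≤ x.natAbs),
      (ab x + na y)⁻¹ * (Real.sqrt (ab y))⁻¹ ≤ 8 * (Real.sqrt (ab x))⁻¹ := by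
    have step1 : ∑ y ∈ F.filter (fun y => ¬ y.natAbs ≤ x.natAbs),
        (ab x + na y)⁻¹ * (Real.sqrt (ab y))⁻¹
        ≤ ∑ y ∈ F.filter (fun y => ¬ y.natAbs ≤ x.natAbs), (ab y * Real.sqrt (ab y))⁻¹ := by
      apply Finset.sum_le_sum
      intro y _
      rw [mul_inv]
      apply mul_le_mul_of_nonneg_right _ (by positivity)
      apply inv_anti₀ (ab_pos y)
      have := na_nonneg x
      unfold ab
      linarith
    have step2 : ∑ y ∈ F.filter (fun y => ¬ y.natAbs ≤ x.natAbs), (ab y * Real.sqrt (ab y))⁻¹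
        ≤ 8 * (Real.sqrt (1 + (x.natAbs:ℝ)))⁻¹ := by
      apply zsum_tail32
      intro y hy
      have := (Finset.mem_filter.mp hy).2
      omega
    rw [← ab_def] at step2
    linarith
  linarith

/-- Schur row bound R3. -/
lemma rowR3 (x : ℤ) (F : Finset ℤ) :
    ∑ y ∈ F, (ab x + na y)⁻¹ * (Real.sqrt (ab (x - y)))⁻¹ ≤ 29 * (Real.sqrt (ab x))⁻¹ := by
  classical
  have hax := ab_pos x
  have hsx : 0 < Real.sqrt (ab x) := Real.sqrt_pos.mpr hax
  rw [← Finset.sum_filter_add_sum_filter_not F (fun y => 2*(x-y).natAbs ≤ x.natAbs)]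
  set F1 := F.filter (fun y => 2*(x-y).natAbs ≤ x.natAbs) with hF1
  set G := F.filter (fun y => ¬ 2*(x-y).natAbs ≤ x.natAbs) with hG
  rw [← Finset.sum_filter_add_sum_filter_not G (fun y => y.natAbs ≤ x.natAbs)]
  set F2 := G.filter (fun y => y.natAbs ≤ x.natAbs) with hF2
  set F3 := G.filter (fun y => ¬ y.natAbs ≤ x.natAbs) with hF3
  -- piece 1
  have p1 : ∑ y ∈ F1, (ab x + na y)⁻¹ * (Real.sqrt (ab (x - y)))⁻¹
      ≤ 4 * (Real.sqrt (ab x))⁻¹ := by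
    have step1 : ∑ y ∈ F1, (ab x + na y)⁻¹ * (Real.sqrt (ab (x - y)))⁻¹
        ≤ ∑ y ∈ F1, (ab x)⁻¹ * (Real.sqrt (ab (x - y)))⁻¹ := by
      apply Finset.sum_le_sum
      intro y _
      apply mul_le_mul_of_nonneg_right _ (by positivity)
      apply inv_anti₀ hax (by have := na_nonneg y; linarith)
    have hinj : ∀ y ∈ F1, ∀ z ∈ F1, x - y = x - z → y = z := by
      intro y _ z _ h; omega
    have step3 : ∑ y ∈ F1, (Real.sqrt (ab (x - y)))⁻¹ ≤ 4 * Real.sqrt (ab x) := by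
      have himg := zsum_inv_sqrt x.natAbs (F1.image (fun y => x - y)) (by
        intro u hu
        obtain ⟨y, hy, rfl⟩ := Finset.mem_image.mp hu
        have := (Finset.mem_filter.mp hy).2
        omega)
      rw [← ab_def] at himg
      calc ∑ y ∈ F1, (Real.sqrt (ab (x - y)))⁻¹
          = ∑ u ∈ F1.image (fun y => x - y), (Real.sqrt (ab u))⁻¹ :=
            (Finset.sum_image (f := fun u => (Real.sqrt (ab u))⁻¹) hinj).symm
        _ ≤ 4 * Real.sqrt (ab x) := himg
    calc ∑ y ∈ F1, (ab x + na y)⁻¹ * (Real.sqrt (ab (x - y)))⁻¹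
        ≤ (ab x)⁻¹ * ∑ y ∈ F1, (Real.sqrt (ab (x - y)))⁻¹ := by
          rw [Finset.mul_sum]; exact step1
      _ ≤ (ab x)⁻¹ * (4 * Real.sqrt (ab x)) := by
          apply mul_le_mul_of_nonneg_left step3 (by positivity)
      _ = 4 * ((ab x)⁻¹ * Real.sqrt (ab x)) := by ring
      _ = 4 * (Real.sqrt (ab x))⁻¹ := by rw [inv_sqrt_helper hax]
  -- piece 2
  have p2 : ∑ y ∈ F2, (ab x + na y)⁻¹ * (Real.sqrt (ab (x - y)))⁻¹
      ≤ 3 * (Real.sqrt (ab x))⁻¹ := by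
    have bound : ∀ y ∈ F2, (ab x + na y)⁻¹ * (Real.sqrt (ab (x - y)))⁻¹
        ≤ (ab x)⁻¹ * (Real.sqrt 2 * (Real.sqrt (ab x))⁻¹) := by
      intro y hy
      have hmem := Finset.mem_filter.mp hy
      have hP1 : ¬ 2*(x-y).natAbs ≤ x.natAbs := (Finset.mem_filter.mp (hmem.1)).2
      apply mul_le_mul
      · apply inv_anti₀ hax (by have := na_nonneg y; linarith)
      · apply inv_sqrt_le_c hax (ab_pos _)
        apply ab_le_two
        omega
      · positivity
      · positivity
    have hcard : (F2.card : ℝ) ≤ 2 * ab x := by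
      have := zcard x.natAbs F2 (fun y hy => (Finset.mem_filter.mp hy).2)
      rw [ab_def]
      linarith
    calc ∑ y ∈ F2, (ab x + na y)⁻¹ * (Real.sqrt (ab (x - y)))⁻¹
        ≤ (F2.card : ℝ) * ((ab x)⁻¹ * (Real.sqrt 2 * (Real.sqrt (ab x))⁻¹)) := by
          have := Finset.sum_le_card_nsmul F2 _ _ bound
          rwa [nsmul_eq_mul] at this
      _ ≤ (2 * ab x) * ((ab x)⁻¹ * (Real.sqrt 2 * (Real.sqrt (ab x))⁻¹)) := by
          apply mul_le_mul_of_nonneg_right hcard (by positivity)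
      _ = (2 * Real.sqrt 2) * ((ab x * (ab x)⁻¹) * (Real.sqrt (ab x))⁻¹) := by ring
      _ = (2 * Real.sqrt 2) * (Real.sqrt (ab x))⁻¹ := by
          rw [mul_inv_cancel₀ (ne_of_gt hax), one_mul]
      _ ≤ 3 * (Real.sqrt (ab x))⁻¹ := by
          have := sqrt2_le
          apply mul_le_mul_of_nonneg_right _ (by positivity)
          linarith
  -- piece 3
  have p3 : ∑ y ∈ F3, (ab x + na y)⁻¹ * (Real.sqrt (ab (x - y)))⁻¹
      ≤ 22 * (Real.sqrt (ab x))⁻¹ := by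
    have bound : ∀ y ∈ F3, (ab x + na y)⁻¹ * (Real.sqrt (ab (x - y)))⁻¹
        ≤ Real.sqrt 3 * ((ab x + na y)⁻¹ * (Real.sqrt (ab y))⁻¹) := by
      intro y hy
      have hmem := Finset.mem_filter.mp hy
      have hP1 : ¬ 2*(x-y).natAbs ≤ x.natAbs := (Finset.mem_filter.mp (hmem.1)).2
      have hP2 : ¬ y.natAbs ≤ x.natAbs := hmem.2
      have key : (Real.sqrt (ab (x - y)))⁻¹ ≤ Real.sqrt 3 * (Real.sqrt (ab y))⁻¹ := by
        apply inv_sqrt_le_c (ab_pos y) (ab_pos _)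
        apply ab_le_three
        omega
      calc (ab x + na y)⁻¹ * (Real.sqrt (ab (x - y)))⁻¹
          ≤ (ab x + na y)⁻¹ * (Real.sqrt 3 * (Real.sqrt (ab y))⁻¹) := by
            apply mul_le_mul_of_nonneg_left key
              (inv_nonneg.mpr (by have := ab_pos x; have := na_nonneg y; linarith))
        _ = Real.sqrt 3 * ((ab x + na y)⁻¹ * (Real.sqrt (ab y))⁻¹) := by ring
    calc ∑ y ∈ F3, (ab x + na y)⁻¹ * (Real.sqrt (ab (x - y)))⁻¹
        ≤ ∑ y ∈ F3, Real.sqrt 3 * ((ab x + na y)⁻¹ * (Real.sqrt (ab y))⁻¹) :=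
          Finset.sum_le_sum bound
      _ = Real.sqrt 3 * ∑ y ∈ F3, (ab x + na y)⁻¹ * (Real.sqrt (ab y))⁻¹ :=
          (Finset.mul_sum _ _ _).symm
      _ ≤ Real.sqrt 3 * (12 * (Real.sqrt (ab x))⁻¹) := by
          apply mul_le_mul_of_nonneg_left (rowR1 x F3) (Real.sqrt_nonneg 3)
      _ ≤ 22 * (Real.sqrt (ab x))⁻¹ := by
          have := sqrt3_le
          have h0 : (0:ℝ) ≤ (Real.sqrt (ab x))⁻¹ := by positivity
          nlinarith
  linarith

/-- Schur row bound R2. -/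
lemma rowR2 (x : ℤ) (F : Finset ℤ) :
    ∑ y ∈ F, (ab x + na y)⁻¹ * (Real.sqrt (ab (x - y)))⁻¹ * (Real.sqrt (ab y))⁻¹
      ≤ 20 * (ab x)⁻¹ := by
  classical
  have hax := ab_pos x
  have hsx : 0 < Real.sqrt (ab x) := Real.sqrt_pos.mpr hax
  rw [← Finset.sum_filter_add_sum_filter_not F (fun y => 2*(x-y).natAbs ≤ x.natAbs)]
  set F1 := F.filter (fun y => 2*(x-y).natAbs ≤ x.natAbs) with hF1
  set G := F.filter (fun y => ¬ 2*(x-y).natAbs ≤ x.natAbs) with hG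
  rw [← Finset.sum_filter_add_sum_filter_not G (fun y => y.natAbs ≤ x.natAbs)]
  set F2 := G.filter (fun y => y.natAbs ≤ x.natAbs) with hF2
  set F3 := G.filter (fun y => ¬ y.natAbs ≤ x.natAbs) with hF3
  -- piece 1
  have p1 : ∑ y ∈ F1, (ab x + na y)⁻¹ * (Real.sqrt (ab (x - y)))⁻¹ * (Real.sqrt (ab y))⁻¹
      ≤ 6 * (ab x)⁻¹ := by
    have bound : ∀ y ∈ F1, (ab x + na y)⁻¹ * (Real.sqrt (ab (x - y)))⁻¹ * (Real.sqrt (ab y))⁻¹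
        ≤ ((ab x)⁻¹ * (Real.sqrt 2 * (Real.sqrt (ab x))⁻¹)) * (Real.sqrt (ab (x - y)))⁻¹ := by
      intro y hy
      have hP1 : 2*(x-y).natAbs ≤ x.natAbs := (Finset.mem_filter.mp hy).2
      have h1 : (ab x + na y)⁻¹ ≤ (ab x)⁻¹ :=
        inv_anti₀ hax (by have := na_nonneg y; linarith)
      have h2 : (Real.sqrt (ab y))⁻¹ ≤ Real.sqrt 2 * (Real.sqrt (ab x))⁻¹ := by
        apply inv_sqrt_le_c hax (ab_pos y)
        apply ab_le_two
        omega
      calc (ab x + na y)⁻¹ * (Real.sqrt (ab (x - y)))⁻¹ * (Real.sqrt (ab y))⁻¹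
          ≤ ((ab x)⁻¹ * (Real.sqrt (ab (x - y)))⁻¹) * (Real.sqrt 2 * (Real.sqrt (ab x))⁻¹) := by
            apply mul_le_mul
            · exact mul_le_mul_of_nonneg_right h1 (by positivity)
            · exact h2
            · positivity
            · positivity
        _ = ((ab x)⁻¹ * (Real.sqrt 2 * (Real.sqrt (ab x))⁻¹)) * (Real.sqrt (ab (x - y)))⁻¹ := by
            ring
    have hinj : ∀ y ∈ F1, ∀ z ∈ F1, x - y = x - z → y = z := by
      intro y _ z _ h; omega
    have step2 : ∑ y ∈ F1, (Real.sqrt (ab (x - y)))⁻¹ ≤ 4 * Real.sqrt (ab x) := by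
      have himg := zsum_inv_sqrt x.natAbs (F1.image (fun y => x - y)) (by
        intro u hu
        obtain ⟨y, hy, rfl⟩ := Finset.mem_image.mp hu
        have := (Finset.mem_filter.mp hy).2
        omega)
      rw [← ab_def] at himg
      calc ∑ y ∈ F1, (Real.sqrt (ab (x - y)))⁻¹
          = ∑ u ∈ F1.image (fun y => x - y), (Real.sqrt (ab u))⁻¹ :=
            (Finset.sum_image (f := fun u => (Real.sqrt (ab u))⁻¹) hinj).symm
        _ ≤ 4 * Real.sqrt (ab x) := himg
    calc ∑ y ∈ F1, (ab x + na y)⁻¹ * (Real.sqrt (ab (x - y)))⁻¹ * (Real.sqrt (ab y))⁻¹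
        ≤ ∑ y ∈ F1, ((ab x)⁻¹ * (Real.sqrt 2 * (Real.sqrt (ab x))⁻¹)) * (Real.sqrt (ab (x - y)))⁻¹ :=
          Finset.sum_le_sum bound
      _ = ((ab x)⁻¹ * (Real.sqrt 2 * (Real.sqrt (ab x))⁻¹)) * ∑ y ∈ F1, (Real.sqrt (ab (x - y)))⁻¹ :=
          (Finset.mul_sum _ _ _).symm
      _ ≤ ((ab x)⁻¹ * (Real.sqrt 2 * (Real.sqrt (ab x))⁻¹)) * (4 * Real.sqrt (ab x)) := by
          apply mul_le_mul_of_nonneg_left step2 (by positivity)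
      _ = (4 * Real.sqrt 2) * (ab x)⁻¹ * ((Real.sqrt (ab x))⁻¹ * Real.sqrt (ab x)) := by ring
      _ = (4 * Real.sqrt 2) * (ab x)⁻¹ := by rw [inv_sqrt_cancel hax, mul_one]
      _ ≤ 6 * (ab x)⁻¹ := by
          have := sqrt2_le
          apply mul_le_mul_of_nonneg_right _ (by positivity)
          linarith
  -- piece 2
  have p2 : ∑ y ∈ F2, (ab x + na y)⁻¹ * (Real.sqrt (ab (x - y)))⁻¹ * (Real.sqrt (ab y))⁻¹
      ≤ 6 * (ab x)⁻¹ := by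
    have bound : ∀ y ∈ F2, (ab x + na y)⁻¹ * (Real.sqrt (ab (x - y)))⁻¹ * (Real.sqrt (ab y))⁻¹
        ≤ ((ab x)⁻¹ * (Real.sqrt 2 * (Real.sqrt (ab x))⁻¹)) * (Real.sqrt (ab y))⁻¹ := by
      intro y hy
      have hmem := Finset.mem_filter.mp hy
      have hP1 : ¬ 2*(x-y).natAbs ≤ x.natAbs := (Finset.mem_filter.mp hmem.1).2
      have h1 : (ab x + na y)⁻¹ ≤ (ab x)⁻¹ :=
        inv_anti₀ hax (by have := na_nonneg y; linarith)
      have h2 : (Real.sqrt (ab (x - y)))⁻¹ ≤ Real.sqrt 2 * (Real.sqrt (ab x))⁻¹ := by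
        apply inv_sqrt_le_c hax (ab_pos _)
        apply ab_le_two
        omega
      apply mul_le_mul_of_nonneg_right _ (by positivity)
      exact mul_le_mul h1 h2 (by positivity) (by positivity)
    have step2 : ∑ y ∈ F2, (Real.sqrt (ab y))⁻¹ ≤ 4 * Real.sqrt (ab x) := by
      have := zsum_inv_sqrt x.natAbs F2 (fun y hy => (Finset.mem_filter.mp hy).2)
      rwa [← ab_def] at this
    calc ∑ y ∈ F2, (ab x + na y)⁻¹ * (Real.sqrt (ab (x - y)))⁻¹ * (Real.sqrt (ab y))⁻¹
        ≤ ∑ y ∈ F2, ((ab x)⁻¹ * (Real.sqrt 2 * (Real.sqrt (ab x))⁻¹)) * (Real.sqrt (ab y))⁻¹ :=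
          Finset.sum_le_sum bound
      _ = ((ab x)⁻¹ * (Real.sqrt 2 * (Real.sqrt (ab x))⁻¹)) * ∑ y ∈ F2, (Real.sqrt (ab y))⁻¹ :=
          (Finset.mul_sum _ _ _).symm
      _ ≤ ((ab x)⁻¹ * (Real.sqrt 2 * (Real.sqrt (ab x))⁻¹)) * (4 * Real.sqrt (ab x)) := by
          apply mul_le_mul_of_nonneg_left step2 (by positivity)
      _ = (4 * Real.sqrt 2) * (ab x)⁻¹ * ((Real.sqrt (ab x))⁻¹ * Real.sqrt (ab x)) := by ring
      _ = (4 * Real.sqrt 2) * (ab x)⁻¹ := by rw [inv_sqrt_cancel hax, mul_one]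
      _ ≤ 6 * (ab x)⁻¹ := by
          have := sqrt2_le
          apply mul_le_mul_of_nonneg_right _ (by positivity)
          linarith
  -- piece 3
  have p3 : ∑ y ∈ F3, (ab x + na y)⁻¹ * (Real.sqrt (ab (x - y)))⁻¹ * (Real.sqrt (ab y))⁻¹
      ≤ 8 * (ab x)⁻¹ := by
    have bound : ∀ y ∈ F3, (ab x + na y)⁻¹ * (Real.sqrt (ab (x - y)))⁻¹ * (Real.sqrt (ab y))⁻¹
        ≤ Real.sqrt 3 * ((ab y)^2)⁻¹ := by
      intro y hy
      have hmem := Finset.mem_filter.mp hy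
      have hP1 : ¬ 2*(x-y).natAbs ≤ x.natAbs := (Finset.mem_filter.mp hmem.1).2
      have hP2 : ¬ y.natAbs ≤ x.natAbs := hmem.2
      have hay := ab_pos y
      have h1 : (ab x + na y)⁻¹ ≤ (ab y)⁻¹ := by
        apply inv_anti₀ hay
        have := na_nonneg x
        unfold ab
        linarith
      have h2 : (Real.sqrt (ab (x - y)))⁻¹ ≤ Real.sqrt 3 * (Real.sqrt (ab y))⁻¹ := by
        apply inv_sqrt_le_c hay (ab_pos _)
        apply ab_le_three
        omega
      have h3 : (Real.sqrt (ab y))⁻¹ * (Real.sqrt (ab y))⁻¹ = (ab y)⁻¹ := by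
        rw [← mul_inv, Real.mul_self_sqrt hay.le]
      calc (ab x + na y)⁻¹ * (Real.sqrt (ab (x - y)))⁻¹ * (Real.sqrt (ab y))⁻¹
          ≤ ((ab y)⁻¹ * (Real.sqrt 3 * (Real.sqrt (ab y))⁻¹)) * (Real.sqrt (ab y))⁻¹ := by
            apply mul_le_mul_of_nonneg_right _ (by positivity)
            exact mul_le_mul h1 h2 (by positivity) (by positivity)
        _ = Real.sqrt 3 * ((ab y)⁻¹ * ((Real.sqrt (ab y))⁻¹ * (Real.sqrt (ab y))⁻¹)) := by ring
        _ = Real.sqrt 3 * ((ab y)⁻¹ * (ab y)⁻¹) := by rw [h3]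
        _ = Real.sqrt 3 * ((ab y)^2)⁻¹ := by rw [sq, mul_inv]
    have step2 : ∑ y ∈ F3, ((ab y)^2)⁻¹ ≤ 4 * (ab x)⁻¹ := by
      have := zsum_tail2 x.natAbs F3 (fun y hy => by
        have := (Finset.mem_filter.mp hy).2; omega)
      rwa [← ab_def] at this
    calc ∑ y ∈ F3, (ab x + na y)⁻¹ * (Real.sqrt (ab (x - y)))⁻¹ * (Real.sqrt (ab y))⁻¹
        ≤ ∑ y ∈ F3, Real.sqrt 3 * ((ab y)^2)⁻¹ := Finset.sum_le_sum bound
      _ = Real.sqrt 3 * ∑ y ∈ F3, ((ab y)^2)⁻¹ := (Finset.mul_sum _ _ _).symm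
      _ ≤ Real.sqrt 3 * (4 * (ab x)⁻¹) := by
          apply mul_le_mul_of_nonneg_left step2 (Real.sqrt_nonneg 3)
      _ ≤ 8 * (ab x)⁻¹ := by
          have := sqrt3_le
          have h0 : (0:ℝ) ≤ (ab x)⁻¹ := by positivity
          nlinarith
  linarith

/-- finite-sum criterion for a `tsum` bound in `ℝ≥0∞`. -/
lemma tsum_ofReal_le {ι : Type*} {f : ι → ℝ} {B : ℝ} (hf : ∀ i, 0 ≤ f i)
    (h : ∀ F : Finset ι, ∑ i ∈ F, f i ≤ B) :
    ∑' i, ENNReal.ofReal (f i) ≤ ENNReal.ofReal B := by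
  rw [ENNReal.tsum_eq_iSup_sum]
  apply iSup_le
  intro s
  rw [← ENNReal.ofReal_sum_of_nonneg (fun i _ => hf i)]
  exact ENNReal.ofReal_le_ofReal (h s)

lemma amgm_schur {K qx qy cx cy : ℝ} (hK : 0 ≤ K) (hqx : 0 < qx) (hqy : 0 < qy)
    (hcx : 0 ≤ cx) (hcy : 0 ≤ cy) :
    K * cx * cy ≤ (K * qy) * (cx^2 * qx⁻¹) + (K * qx) * (cy^2 * qy⁻¹) := by
  have h : cx * cy ≤ qy * cx^2 * qx⁻¹ + qx * cy^2 * qy⁻¹ := by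
    rw [← sub_nonneg]
    have e : qy * cx^2 * qx⁻¹ + qx * cy^2 * qy⁻¹ - cx*cy
        = ((qy*cx - qx*cy)^2 + qx*qy*cx*cy) / (qx*qy) := by
      field_simp
      ring
    rw [e]
    positivity
  calc K * cx * cy = K * (cx * cy) := by ring
    _ ≤ K * (qy * cx^2 * qx⁻¹ + qx * cy^2 * qy⁻¹) := mul_le_mul_of_nonneg_left h hK
    _ = (K * qy) * (cx^2 * qx⁻¹) + (K * qx) * (cy^2 * qy⁻¹) := by ring

/-- Schur test, `ℝ≥0∞` version. -/
lemma schur_bound (c : ℤ → ℝ) (hc : ∀ k, 0 ≤ c k)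
    (K : ℤ → ℤ → ℝ) (hK : ∀ x y, 0 ≤ K x y)
    (q : ℤ → ℝ) (hq : ∀ x, 0 < q x) (Lr Lc : ℝ) (hLr : 0 ≤ Lr) (hLc : 0 ≤ Lc)
    (hrow : ∀ x, ∀ F : Finset ℤ, ∑ y ∈ F, K x y * q y ≤ Lr * q x)
    (hcol : ∀ y, ∀ F : Finset ℤ, ∑ x ∈ F, K x y * q x ≤ Lc * q y) :
    ∑' (x:ℤ), ∑' (y:ℤ), ENNReal.ofReal (K x y * c x * c y)
      ≤ (ENNReal.ofReal Lr + ENNReal.ofReal Lc) * ∑' (k:ℤ), ENNReal.ofReal ((c k)^2) := by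
  have pointwise : ∀ x y, ENNReal.ofReal (K x y * c x * c y)
      ≤ ENNReal.ofReal ((K x y * q y) * ((c x)^2 * (q x)⁻¹))
        + ENNReal.ofReal ((K x y * q x) * ((c y)^2 * (q y)⁻¹)) := by
    intro x y
    rw [← ENNReal.ofReal_add
      (mul_nonneg (mul_nonneg (hK x y) (hq y).le)
        (mul_nonneg (sq_nonneg _) (inv_nonneg.mpr (hq x).le)))
      (mul_nonneg (mul_nonneg (hK x y) (hq x).le)
        (mul_nonneg (sq_nonneg _) (inv_nonneg.mpr (hq y).le)))]
    exact ENNReal.ofReal_le_ofReal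
      (amgm_schur (hK x y) (hq x) (hq y) (hc x) (hc y))
  have step1 : ∑' (x:ℤ), ∑' (y:ℤ), ENNReal.ofReal (K x y * c x * c y)
      ≤ (∑' (x:ℤ), ∑' (y:ℤ), ENNReal.ofReal ((K x y * q y) * ((c x)^2 * (q x)⁻¹)))
        + (∑' (x:ℤ), ∑' (y:ℤ), ENNReal.ofReal ((K x y * q x) * ((c y)^2 * (q y)⁻¹))) := by
    rw [← ENNReal.tsum_add]
    apply ENNReal.tsum_le_tsum
    intro x
    rw [← ENNReal.tsum_add]
    exact ENNReal.tsum_le_tsum (fun y => pointwise x y)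
  have row_part : (∑' (x:ℤ), ∑' (y:ℤ), ENNReal.ofReal ((K x y * q y) * ((c x)^2 * (q x)⁻¹)))
      ≤ ENNReal.ofReal Lr * ∑' (k:ℤ), ENNReal.ofReal ((c k)^2) := by
    have inner : ∀ x:ℤ, ∑' (y:ℤ), ENNReal.ofReal ((K x y * q y) * ((c x)^2 * (q x)⁻¹))
        = ENNReal.ofReal ((c x)^2 * (q x)⁻¹) * ∑' (y:ℤ), ENNReal.ofReal (K x y * q y) := by
      intro x
      rw [← ENNReal.tsum_mul_left]
      congr 1
      funext y
      rw [← ENNReal.ofReal_mul (mul_nonneg (sq_nonneg _) (inv_nonneg.mpr (hq x).le))]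
      congr 1
      ring
    calc (∑' (x:ℤ), ∑' (y:ℤ), ENNReal.ofReal ((K x y * q y) * ((c x)^2 * (q x)⁻¹)))
        = ∑' (x:ℤ), ENNReal.ofReal ((c x)^2 * (q x)⁻¹) * ∑' (y:ℤ), ENNReal.ofReal (K x y * q y) := by
          exact tsum_congr inner
      _ ≤ ∑' (x:ℤ), ENNReal.ofReal ((c x)^2 * (q x)⁻¹) * ENNReal.ofReal (Lr * q x) := by
          apply ENNReal.tsum_le_tsum
          intro x
          apply mul_le_mul_right (tsum_ofReal_le
            (fun y => mul_nonneg (hK x y) (hq y).le) (hrow x))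
      _ = ∑' (x:ℤ), ENNReal.ofReal (Lr * (c x)^2) := by
          apply tsum_congr
          intro x
          rw [← ENNReal.ofReal_mul (mul_nonneg (sq_nonneg _) (inv_nonneg.mpr (hq x).le))]
          congr 1
          have hqx := (hq x).ne'
          field_simp
      _ = ENNReal.ofReal Lr * ∑' (k:ℤ), ENNReal.ofReal ((c k)^2) := by
          rw [← ENNReal.tsum_mul_left]
          exact tsum_congr (fun x => ENNReal.ofReal_mul hLr)
  have col_part : (∑' (x:ℤ), ∑' (y:ℤ), ENNReal.ofReal ((K x y * q x) * ((c y)^2 * (q y)⁻¹)))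
      ≤ ENNReal.ofReal Lc * ∑' (k:ℤ), ENNReal.ofReal ((c k)^2) := by
    rw [ENNReal.tsum_comm]
    have inner : ∀ y:ℤ, ∑' (x:ℤ), ENNReal.ofReal ((K x y * q x) * ((c y)^2 * (q y)⁻¹))
        = ENNReal.ofReal ((c y)^2 * (q y)⁻¹) * ∑' (x:ℤ), ENNReal.ofReal (K x y * q x) := by
      intro y
      rw [← ENNReal.tsum_mul_left]
      congr 1
      funext x
      rw [← ENNReal.ofReal_mul (mul_nonneg (sq_nonneg _) (inv_nonneg.mpr (hq y).le))]
      congr 1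
      ring
    calc (∑' (y:ℤ), ∑' (x:ℤ), ENNReal.ofReal ((K x y * q x) * ((c y)^2 * (q y)⁻¹)))
        = ∑' (y:ℤ), ENNReal.ofReal ((c y)^2 * (q y)⁻¹) * ∑' (x:ℤ), ENNReal.ofReal (K x y * q x) := by
          exact tsum_congr inner
      _ ≤ ∑' (y:ℤ), ENNReal.ofReal ((c y)^2 * (q y)⁻¹) * ENNReal.ofReal (Lc * q y) := by
          apply ENNReal.tsum_le_tsum
          intro y
          apply mul_le_mul_right (tsum_ofReal_le
            (fun x => mul_nonneg (hK x y) (hq x).le) (hcol y))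
      _ = ∑' (y:ℤ), ENNReal.ofReal (Lc * (c y)^2) := by
          apply tsum_congr
          intro y
          rw [← ENNReal.ofReal_mul (mul_nonneg (sq_nonneg _) (inv_nonneg.mpr (hq y).le))]
          congr 1
          have hqy := (hq y).ne'
          field_simp
      _ = ENNReal.ofReal Lc * ∑' (k:ℤ), ENNReal.ofReal ((c k)^2) := by
          rw [← ENNReal.tsum_mul_left]
          exact tsum_congr (fun y => ENNReal.ofReal_mul hLc)
  calc ∑' (x:ℤ), ∑' (y:ℤ), ENNReal.ofReal (K x y * c x * c y)
      ≤ _ + _ := step1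
    _ ≤ ENNReal.ofReal Lr * ∑' (k:ℤ), ENNReal.ofReal ((c k)^2)
        + ENNReal.ofReal Lc * ∑' (k:ℤ), ENNReal.ofReal ((c k)^2) :=
        add_le_add row_part col_part
    _ = (ENNReal.ofReal Lr + ENNReal.ofReal Lc) * ∑' (k:ℤ), ENNReal.ofReal ((c k)^2) := by
        rw [add_mul]

section Maximal
variable {A : ℝ} {c : ℤ → ℝ} (hA : 1 ≤ A) (hc : ∀ k, 0 ≤ c k)
  (hmax : ∀ (k : ℤ) (j : ℕ), ∑ l ∈ Finset.Icc (k - (j:ℤ)) (k + (j:ℤ)), c l ≤ A*(2*(j:ℝ)+1)*c k)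

include hA hc hmax in
/-- window sum bound (center 0). -/
lemma sumM0 (N : ℕ) :
    ∑' (l:ℤ), ENNReal.ofReal (if l.natAbs ≤ N then c l else 0)
      ≤ ENNReal.ofReal (A*(2*(N:ℝ)+1)*c 0) := by
  apply tsum_ofReal_le (fun l => by by_cases h : l.natAbs ≤ N <;> simp [h, hc l])
  intro F
  rw [← Finset.sum_filter]
  have hsub : F.filter (fun l => l.natAbs ≤ N) ⊆ Finset.Icc (0 - (N:ℤ)) (0 + (N:ℤ)) := by
    intro l hl
    have := (Finset.mem_filter.mp hl).2
    simp only [Finset.mem_Icc]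
    omega
  calc ∑ l ∈ F.filter (fun l => l.natAbs ≤ N), c l
      ≤ ∑ l ∈ Finset.Icc (0 - (N:ℤ)) (0 + (N:ℤ)), c l :=
        Finset.sum_le_sum_of_subset_of_nonneg hsub (fun i _ _ => hc i)
    _ ≤ A*(2*(N:ℝ)+1)*c 0 := hmax 0 N

include hA hc hmax in
/-- weighted maximal bound (center 0): `Σ_l (1+R+|l|)⁻² c_l ≤ 32 A (1+R)⁻¹ c_0`. -/
lemma sumM1 (R : ℝ) (hR : 0 ≤ R) :
    ∑' (l:ℤ), ENNReal.ofReal (((1+R+(l.natAbs:ℝ))^2)⁻¹ * c l)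
      ≤ ENNReal.ofReal (32*A*(1+R)⁻¹*c 0) := by
  have hA0 : (0:ℝ) ≤ A := by linarith
  have stepa : ∀ l:ℤ, ENNReal.ofReal (((1+R+(l.natAbs:ℝ))^2)⁻¹ * c l)
      ≤ 8 * ∑' (j:ℕ), (if l.natAbs ≤ j then
          ENNReal.ofReal (((1+R+(j:ℝ))^3)⁻¹ * c l) else 0) := by
    intro l
    set n := l.natAbs with hn
    set T := n + ⌈R⌉₊ + 1 with hT
    have hu : (0:ℝ) < 1+R+(n:ℝ) := by positivity
    have hceil : (⌈R⌉₊:ℝ) ≤ R + 1 := by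
      have := Nat.ceil_lt_add_one hR
      linarith
    have hTcast : (1+R+(n:ℝ)) ≤ (T:ℝ) := by
      have h1 : (T:ℝ) = (n:ℝ) + (⌈R⌉₊:ℝ) + 1 := by
        rw [hT]; push_cast; ring
      have := Nat.le_ceil R
      linarith
    have each : ∀ j ∈ Finset.Ico n (n+T),
        ENNReal.ofReal (((2*(1+R+(n:ℝ)))^3)⁻¹ * c l)
          ≤ ENNReal.ofReal (((1+R+(j:ℝ))^3)⁻¹ * c l) := by
      intro j hj
      apply ENNReal.ofReal_le_ofReal
      apply mul_le_mul_of_nonneg_right _ (hc l)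
      apply inv_anti₀ (by positivity)
      have hjc : (j:ℝ) + 1 ≤ (n:ℝ) + (T:ℝ) := by
        have := (Finset.mem_Ico.mp hj).2
        exact_mod_cast Nat.succ_le_of_lt this
      have hTr : (T:ℝ) = (n:ℝ) + (⌈R⌉₊:ℝ) + 1 := by
        rw [hT]; push_cast; ring
      have hjr : (1+R+(j:ℝ)) ≤ 2*(1+R+(n:ℝ)) := by
        rw [hTr] at hjc
        linarith
      exact pow_le_pow_left₀ (by positivity) hjr 3
    have hcardlb : ENNReal.ofReal ((T:ℝ) * (((2*(1+R+(n:ℝ)))^3)⁻¹ * c l))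
        ≤ ∑ j ∈ Finset.Ico n (n+T), ENNReal.ofReal (((1+R+(j:ℝ))^3)⁻¹ * c l) := by
      have hcard : (Finset.Ico n (n+T)).card = T := by
        rw [Nat.card_Ico]
        omega
      have hle := Finset.card_nsmul_le_sum (Finset.Ico n (n+T))
        (fun j => ENNReal.ofReal (((1+R+(j:ℝ))^3)⁻¹ * c l))
        (ENNReal.ofReal (((2*(1+R+(n:ℝ)))^3)⁻¹ * c l)) each
      rw [hcard] at hle
      calc ENNReal.ofReal ((T:ℝ) * (((2*(1+R+(n:ℝ)))^3)⁻¹ * c l))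
          = (T:ℝ≥0∞) * ENNReal.ofReal (((2*(1+R+(n:ℝ)))^3)⁻¹ * c l) := by
            rw [ENNReal.ofReal_mul (by positivity), ENNReal.ofReal_natCast]
        _ = T • ENNReal.ofReal (((2*(1+R+(n:ℝ)))^3)⁻¹ * c l) := by
            rw [nsmul_eq_mul]
        _ ≤ _ := hle
    have hw : ((1+R+(n:ℝ))^2)⁻¹ ≤ 8 * ((T:ℝ) * (((2*(1+R+(n:ℝ)))^3)⁻¹)) := by
      have h8 : ((2*(1+R+(n:ℝ)))^3)⁻¹ = 8⁻¹ * ((1+R+(n:ℝ))^3)⁻¹ := by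
        rw [show (2*(1+R+(n:ℝ)))^3 = 8*(1+R+(n:ℝ))^3 by ring, mul_inv]
      rw [h8]
      have key : ((1+R+(n:ℝ))^2)⁻¹ ≤ (T:ℝ) * ((1+R+(n:ℝ))^3)⁻¹ := by
        rw [← sub_nonneg]
        have e : (T:ℝ) * ((1+R+(n:ℝ))^3)⁻¹ - ((1+R+(n:ℝ))^2)⁻¹
            = ((T:ℝ) - (1+R+(n:ℝ))) / (1+R+(n:ℝ))^3 := by
          field_simp
        rw [e]
        apply div_nonneg (by linarith) (by positivity)
      calc ((1+R+(n:ℝ))^2)⁻¹ ≤ (T:ℝ) * ((1+R+(n:ℝ))^3)⁻¹ := key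
        _ = 8 * ((T:ℝ) * (8⁻¹ * ((1+R+(n:ℝ))^3)⁻¹)) := by ring
    have hreal : ((1+R+(n:ℝ))^2)⁻¹ * c l
        ≤ 8 * ((T:ℝ) * (((2*(1+R+(n:ℝ)))^3)⁻¹ * c l)) := by
      calc ((1+R+(n:ℝ))^2)⁻¹ * c l
          ≤ (8 * ((T:ℝ) * (((2*(1+R+(n:ℝ)))^3)⁻¹))) * c l :=
            mul_le_mul_of_nonneg_right hw (hc l)
        _ = 8 * ((T:ℝ) * (((2*(1+R+(n:ℝ)))^3)⁻¹ * c l)) := by ring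
    calc ENNReal.ofReal (((1+R+(n:ℝ))^2)⁻¹ * c l)
        ≤ ENNReal.ofReal (8 * ((T:ℝ) * (((2*(1+R+(n:ℝ)))^3)⁻¹ * c l))) :=
          ENNReal.ofReal_le_ofReal hreal
      _ = 8 * ENNReal.ofReal ((T:ℝ) * (((2*(1+R+(n:ℝ)))^3)⁻¹ * c l)) := by
          rw [ENNReal.ofReal_mul (by norm_num : (0:ℝ) ≤ 8)]
          norm_num
      _ ≤ 8 * ∑ j ∈ Finset.Ico n (n+T), ENNReal.ofReal (((1+R+(j:ℝ))^3)⁻¹ * c l) :=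
          mul_le_mul_right hcardlb 8
      _ = 8 * ∑ j ∈ Finset.Ico n (n+T),
            (if n ≤ j then ENNReal.ofReal (((1+R+(j:ℝ))^3)⁻¹ * c l) else 0) := by
          congr 1
          apply Finset.sum_congr rfl
          intro j hj
          rw [if_pos (Finset.mem_Ico.mp hj).1]
      _ ≤ 8 * ∑' (j:ℕ), (if n ≤ j then ENNReal.ofReal (((1+R+(j:ℝ))^3)⁻¹ * c l) else 0) :=
          mul_le_mul_right (ENNReal.sum_le_tsum _) 8
  calc ∑' (l:ℤ), ENNReal.ofReal (((1+R+(l.natAbs:ℝ))^2)⁻¹ * c l)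
      ≤ ∑' (l:ℤ), 8 * ∑' (j:ℕ), (if l.natAbs ≤ j then
          ENNReal.ofReal (((1+R+(j:ℝ))^3)⁻¹ * c l) else 0) :=
        ENNReal.tsum_le_tsum stepa
    _ = 8 * ∑' (l:ℤ), ∑' (j:ℕ), (if l.natAbs ≤ j then
          ENNReal.ofReal (((1+R+(j:ℝ))^3)⁻¹ * c l) else 0) := ENNReal.tsum_mul_left
    _ = 8 * ∑' (j:ℕ), ∑' (l:ℤ), (if l.natAbs ≤ j then
          ENNReal.ofReal (((1+R+(j:ℝ))^3)⁻¹ * c l) else 0) := by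
        rw [ENNReal.tsum_comm]
    _ ≤ 8 * ∑' (j:ℕ), ENNReal.ofReal (((1+R+(j:ℝ))^3)⁻¹ * (A*(2*(j:ℝ)+1)*c 0)) := by
        apply mul_le_mul_right
        apply ENNReal.tsum_le_tsum
        intro j
        have hcongr : ∀ l:ℤ, (if l.natAbs ≤ j then
            ENNReal.ofReal (((1+R+(j:ℝ))^3)⁻¹ * c l) else 0)
            = ENNReal.ofReal (if l.natAbs ≤ j then ((1+R+(j:ℝ))^3)⁻¹ * c l else 0) := by
          intro l
          split <;> simp
        rw [tsum_congr hcongr]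
        apply tsum_ofReal_le
        · intro l
          by_cases h : l.natAbs ≤ j <;>
            simp [h, mul_nonneg (by positivity : (0:ℝ) ≤ ((1+R+(j:ℝ))^3)⁻¹) (hc l)]
        · intro F
          rw [← Finset.sum_filter]
          rw [show ∑ l ∈ F.filter (fun l => l.natAbs ≤ j), ((1+R+(j:ℝ))^3)⁻¹ * c l
              = ((1+R+(j:ℝ))^3)⁻¹ * ∑ l ∈ F.filter (fun l => l.natAbs ≤ j), c l
              from (Finset.mul_sum _ _ _).symm]
          have hsub : F.filter (fun l => l.natAbs ≤ j) ⊆ Finset.Icc (0 - (j:ℤ)) (0 + (j:ℤ)) := by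
            intro l hl
            have := (Finset.mem_filter.mp hl).2
            simp only [Finset.mem_Icc]
            omega
          have hsum : ∑ l ∈ F.filter (fun l => l.natAbs ≤ j), c l ≤ A*(2*(j:ℝ)+1)*c 0 := by
            calc ∑ l ∈ F.filter (fun l => l.natAbs ≤ j), c l
                ≤ ∑ l ∈ Finset.Icc (0 - (j:ℤ)) (0 + (j:ℤ)), c l :=
                  Finset.sum_le_sum_of_subset_of_nonneg hsub (fun i _ _ => hc i)
              _ ≤ A*(2*(j:ℝ)+1)*c 0 := hmax 0 j
          exact mul_le_mul_of_nonneg_left hsum (by positivity)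
    _ ≤ 8 * ENNReal.ofReal (4*(1+R)⁻¹*(A*c 0)) := by
        apply mul_le_mul_right
        apply tsum_ofReal_le
        · intro j
          apply mul_nonneg (by positivity)
          apply mul_nonneg (mul_nonneg hA0 (by positivity)) (hc 0)
        · intro G
          calc ∑ j ∈ G, ((1+R+(j:ℝ))^3)⁻¹ * (A*(2*(j:ℝ)+1)*c 0)
              = (A*c 0) * ∑ j ∈ G, (2*(j:ℝ)+1) * (((1+R+(j:ℝ))^3))⁻¹ := by
                rw [Finset.mul_sum]
                apply Finset.sum_congr rfl
                intro j _
                ring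
            _ ≤ (A*c 0) * (4*(1+R)⁻¹) :=
                mul_le_mul_of_nonneg_left (natsum_R R hR G) (mul_nonneg hA0 (hc 0))
            _ = 4*(1+R)⁻¹*(A*c 0) := by ring
    _ = ENNReal.ofReal (32*A*(1+R)⁻¹*c 0) := by
        rw [show (8:ℝ≥0∞) = ENNReal.ofReal (8:ℝ) by norm_num]
        rw [← ENNReal.ofReal_mul (by norm_num)]
        congr 1
        ring

end Maximal

lemma na_def (x : ℤ) : na x = (x.natAbs : ℝ) := rfl
lemma na_sub_comm (y z : ℤ) : na (y - z) = na (z - y) := by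
  unfold na
  rw [show z - y = -(y-z) by ring, Int.natAbs_neg]


lemma inv_le_of_le_mul {a b t : ℝ} (ha : 0 < a) (ht : 0 < t) (h : a ≤ t*b) :
    b⁻¹ ≤ t * a⁻¹ := by
  have hb : 0 < b := by nlinarith
  rw [← sub_nonneg]
  have e : t*a⁻¹ - b⁻¹ = (t*b - a)/(a*b) := by field_simp
  rw [e]
  apply div_nonneg (by linarith) (by positivity)


section Core
variable {A : ℝ} {c : ℤ → ℝ}


/-- the inner `k₂` sum in region B2. -/
theorem innerB2 (hA : 1 ≤ A) (hc : ∀ k, 0 ≤ c k)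
  (hmax : ∀ (k : ℤ) (j : ℕ), ∑ l ∈ Finset.Icc (k - (j:ℤ)) (k + (j:ℤ)), c l ≤ A*(2*(j:ℝ)+1)*c k)
  (y z : ℤ) :
    ∑' (x:ℤ), ENNReal.ofReal (if 2*x.natAbs ≤ y.natAbs then
        ((1 + na x + na (y - z)) * (1 + na z + na (y - x)))⁻¹ * (c x * (c y * c z)) else 0)
      ≤ ENNReal.ofReal (34*A*c 0 *
          ((1 + na y + na z)⁻¹ * Real.sqrt (ab y) * (Real.sqrt (ab (y - z)))⁻¹ * c y * c z)) := by
  have hA0 : (0:ℝ) ≤ A := by linarith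
  set sy := Real.sqrt (ab y) with hsy
  set sz := Real.sqrt (ab (y - z)) with hsz
  have hsy0 : 0 < sy := Real.sqrt_pos.mpr (ab_pos y)
  have hsz0 : 0 < sz := Real.sqrt_pos.mpr (ab_pos (y - z))
  set t := sy * sz with ht
  have ht0 : 0 < t := mul_pos hsy0 hsz0
  -- step 1 : pointwise factorization
  have step1 : ∀ x:ℤ, (if 2*x.natAbs ≤ y.natAbs then
      ((1 + na x + na (y - z)) * (1 + na z + na (y - x)))⁻¹ * (c x * (c y * c z)) else 0)
      ≤ (2*(1 + na y + na z)⁻¹ * (c y * c z)) *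
        (if 2*x.natAbs ≤ y.natAbs then (1 + na (y - z) + na x)⁻¹ * c x else 0) := by
    intro x
    by_cases hreg : 2*x.natAbs ≤ y.natAbs
    · rw [if_pos hreg, if_pos hreg]
      have hP : (0:ℝ) < 1 + na x + na (y - z) := by
        have := na_nonneg x; have := na_nonneg (y - z); linarith
      have hQ : (0:ℝ) < 1 + na z + na (y - x) := by
        have := na_nonneg z; have := na_nonneg (y - x); linarith
      have hS : (0:ℝ) < 1 + na y + na z := by
        have := na_nonneg y; have := na_nonneg z; linarith
      have hQ2 : (1 + na z + na (y - x))⁻¹ ≤ 2 * (1 + na y + na z)⁻¹ := by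
        apply inv_le_of_le_mul hS (by norm_num)
        have hnat : y.natAbs + z.natAbs + 1 ≤ 2*(1 + z.natAbs + (y - x).natAbs) := by omega
        have hcast : ((y.natAbs + z.natAbs + 1 : ℕ):ℝ)
            ≤ ((2*(1 + z.natAbs + (y - x).natAbs) : ℕ):ℝ) := Nat.cast_le.mpr hnat
        unfold na
        push_cast at hcast ⊢
        linarith
      have e1 : ((1 + na x + na (y - z)) * (1 + na z + na (y - x)))⁻¹
          = (1 + na (y - z) + na x)⁻¹ * (1 + na z + na (y - x))⁻¹ := by
        rw [mul_inv]
        congr 2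
        ring
      rw [e1]
      have hcx := hc x
      have hcy := hc y
      have hcz := hc z
      have hP' : (0:ℝ) < 1 + na (y - z) + na x := by linarith
      calc (1 + na (y - z) + na x)⁻¹ * (1 + na z + na (y - x))⁻¹ * (c x * (c y * c z))
          ≤ (1 + na (y - z) + na x)⁻¹ * (2 * (1 + na y + na z)⁻¹) * (c x * (c y * c z)) := by
            apply mul_le_mul_of_nonneg_right _ (mul_nonneg hcx (mul_nonneg hcy hcz))
            exact mul_le_mul_of_nonneg_left hQ2 (inv_nonneg.mpr hP'.le)
        _ = (2*(1 + na y + na z)⁻¹ * (c y * c z)) * ((1 + na (y - z) + na x)⁻¹ * c x) := by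
            ring
    · rw [if_neg hreg, if_neg hreg]
      rw [mul_zero]
  -- step 3 : AM-GM split of the k₂ weight
  have step3 : ∀ x:ℤ, (if 2*x.natAbs ≤ y.natAbs then (1 + na (y - z) + na x)⁻¹ * c x else 0)
      ≤ (t/2) * (((1 + na (y - z) + na x)^2)⁻¹ * c x)
        + (2*t)⁻¹ * (if x.natAbs ≤ y.natAbs then c x else 0) := by
    intro x
    by_cases hreg : 2*x.natAbs ≤ y.natAbs
    · rw [if_pos hreg, if_pos (by omega : x.natAbs ≤ y.natAbs)]
      have hu : (0:ℝ) < 1 + na (y - z) + na x := by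
        have := na_nonneg x; have := na_nonneg (y - z); linarith
      have h := amgm_inv ht0 hu
      have hcx := hc x
      calc (1 + na (y - z) + na x)⁻¹ * c x
          ≤ (t * ((1 + na (y - z) + na x)^2)⁻¹/2 + (2*t)⁻¹) * c x :=
            mul_le_mul_of_nonneg_right h hcx
        _ = (t/2) * (((1 + na (y - z) + na x)^2)⁻¹ * c x) + (2*t)⁻¹ * c x := by ring
    · rw [if_neg hreg]
      have : (0:ℝ) ≤ (t/2) * (((1 + na (y - z) + na x)^2)⁻¹ * c x) := by
        have := na_nonneg x; have := na_nonneg (y - z); have := hc x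
        positivity
      have h2 : (0:ℝ) ≤ (2*t)⁻¹ * (if x.natAbs ≤ y.natAbs then c x else 0) := by
        apply mul_nonneg (by positivity)
        split
        exacts [hc x, le_rfl]
      linarith
  -- combine pointwise : ifterm ≤ pref * (first + second)
  have pref_nonneg : (0:ℝ) ≤ 2*(1 + na y + na z)⁻¹ * (c y * c z) := by
    have := na_nonneg y; have := na_nonneg z; have := hc y; have := hc z
    positivity
  have pointwise : ∀ x:ℤ, ENNReal.ofReal (if 2*x.natAbs ≤ y.natAbs then
      ((1 + na x + na (y - z)) * (1 + na z + na (y - x)))⁻¹ * (c x * (c y * c z)) else 0)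
      ≤ ENNReal.ofReal (2*(1 + na y + na z)⁻¹ * (c y * c z)) *
        (ENNReal.ofReal ((t/2) * (((1 + na (y - z) + na x)^2)⁻¹ * c x))
          + ENNReal.ofReal ((2*t)⁻¹ * (if x.natAbs ≤ y.natAbs then c x else 0))) := by
    intro x
    have h1 := step1 x
    have h2 := step3 x
    have hfirst : (0:ℝ) ≤ (t/2) * (((1 + na (y - z) + na x)^2)⁻¹ * c x) := by
      have := na_nonneg x; have := na_nonneg (y - z); have := hc x
      positivity
    have hsecond : (0:ℝ) ≤ (2*t)⁻¹ * (if x.natAbs ≤ y.natAbs then c x else 0) := by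
      apply mul_nonneg (by positivity)
      split
      exacts [hc x, le_rfl]
    calc ENNReal.ofReal (if 2*x.natAbs ≤ y.natAbs then
        ((1 + na x + na (y - z)) * (1 + na z + na (y - x)))⁻¹ * (c x * (c y * c z)) else 0)
        ≤ ENNReal.ofReal ((2*(1 + na y + na z)⁻¹ * (c y * c z)) *
            ((t/2) * (((1 + na (y - z) + na x)^2)⁻¹ * c x)
              + (2*t)⁻¹ * (if x.natAbs ≤ y.natAbs then c x else 0))) := by
          apply ENNReal.ofReal_le_ofReal
          calc _ ≤ _ := h1
            _ ≤ _ := mul_le_mul_of_nonneg_left h2 pref_nonneg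
      _ = ENNReal.ofReal (2*(1 + na y + na z)⁻¹ * (c y * c z)) *
          ENNReal.ofReal ((t/2) * (((1 + na (y - z) + na x)^2)⁻¹ * c x)
            + (2*t)⁻¹ * (if x.natAbs ≤ y.natAbs then c x else 0)) :=
          ENNReal.ofReal_mul pref_nonneg
      _ = _ := by rw [ENNReal.ofReal_add hfirst hsecond]
  -- sum up
  have sum1 : ∑' (x:ℤ), ENNReal.ofReal ((t/2) * (((1 + na (y - z) + na x)^2)⁻¹ * c x))
      ≤ ENNReal.ofReal ((t/2) * (32*A*(ab (y - z))⁻¹*c 0)) := by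
    have e : ∀ x:ℤ, ENNReal.ofReal ((t/2) * (((1 + na (y - z) + na x)^2)⁻¹ * c x))
        = ENNReal.ofReal (t/2) * ENNReal.ofReal (((1 + na (y - z) + (x.natAbs:ℝ))^2)⁻¹ * c x) := by
      intro x
      rw [← ENNReal.ofReal_mul (by positivity)]
      rfl
    rw [tsum_congr e, ENNReal.tsum_mul_left]
    rw [ENNReal.ofReal_mul (by positivity)]
    apply mul_le_mul_right
    have := sumM1 hA hc hmax (na (y - z)) (na_nonneg _)
    rw [ab_def]
    rw [na_def]
    exact this
  have sum2 : ∑' (x:ℤ), ENNReal.ofReal ((2*t)⁻¹ * (if x.natAbs ≤ y.natAbs then c x else 0))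
      ≤ ENNReal.ofReal ((2*t)⁻¹ * (A*(2*na y+1)*c 0)) := by
    have e : ∀ x:ℤ, ENNReal.ofReal ((2*t)⁻¹ * (if x.natAbs ≤ y.natAbs then c x else 0))
        = ENNReal.ofReal ((2*t)⁻¹) * ENNReal.ofReal (if x.natAbs ≤ y.natAbs then c x else 0) := by
      intro x
      rw [← ENNReal.ofReal_mul (by positivity)]
    rw [tsum_congr e, ENNReal.tsum_mul_left]
    rw [ENNReal.ofReal_mul (by positivity)]
    apply mul_le_mul_right
    have := sumM0 hA hc hmax y.natAbs
    rw [na_def]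
    exact this
  -- final real computation
  have hsy2 : sy^2 = ab y := Real.sq_sqrt (ab_pos y).le
  have hsz2 : sz^2 = ab (y - z) := Real.sq_sqrt (ab_pos (y - z)).le
  have final_real : (t/2) * (32*A*(ab (y - z))⁻¹*c 0) + (2*t)⁻¹ * (A*(2*na y+1)*c 0)
      ≤ 17*A*c 0 * (sy * sz⁻¹) := by
    have hc0 := hc 0
    have e1 : (t/2) * (32*A*(ab (y - z))⁻¹*c 0) = 16*A*c 0*(sy*sz⁻¹) := by
      rw [← hsz2, ht]
      field_simp
      ring
    have e2 : (2*t)⁻¹ * (A*(2*(ab y))*c 0) = A*c 0*(sy*sz⁻¹) := by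
      rw [← hsy2, ht]
      field_simp
    have hmono : (2*t)⁻¹ * (A*(2*na y+1)*c 0) ≤ (2*t)⁻¹ * (A*(2*(ab y))*c 0) := by
      apply mul_le_mul_of_nonneg_left _ (by positivity)
      apply mul_le_mul_of_nonneg_right _ hc0
      apply mul_le_mul_of_nonneg_left _ hA0
      unfold ab
      linarith
    linarith
  -- assemble
  calc ∑' (x:ℤ), ENNReal.ofReal (if 2*x.natAbs ≤ y.natAbs then
        ((1 + na x + na (y - z)) * (1 + na z + na (y - x)))⁻¹ * (c x * (c y * c z)) else 0)
      ≤ ∑' (x:ℤ), (ENNReal.ofReal (2*(1 + na y + na z)⁻¹ * (c y * c z)) *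
          (ENNReal.ofReal ((t/2) * (((1 + na (y - z) + na x)^2)⁻¹ * c x))
            + ENNReal.ofReal ((2*t)⁻¹ * (if x.natAbs ≤ y.natAbs then c x else 0)))) :=
        ENNReal.tsum_le_tsum pointwise
    _ = ENNReal.ofReal (2*(1 + na y + na z)⁻¹ * (c y * c z)) *
        ((∑' (x:ℤ), ENNReal.ofReal ((t/2) * (((1 + na (y - z) + na x)^2)⁻¹ * c x)))
          + ∑' (x:ℤ), ENNReal.ofReal ((2*t)⁻¹ * (if x.natAbs ≤ y.natAbs then c x else 0))) := by
        rw [ENNReal.tsum_mul_left, ENNReal.tsum_add]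
    _ ≤ ENNReal.ofReal (2*(1 + na y + na z)⁻¹ * (c y * c z)) *
        (ENNReal.ofReal ((t/2) * (32*A*(ab (y - z))⁻¹*c 0))
          + ENNReal.ofReal ((2*t)⁻¹ * (A*(2*na y+1)*c 0))) :=
        mul_le_mul_right (add_le_add sum1 sum2) _
    _ ≤ ENNReal.ofReal (2*(1 + na y + na z)⁻¹ * (c y * c z)) *
        ENNReal.ofReal (17*A*c 0 * (sy * sz⁻¹)) := by
        apply mul_le_mul_right
        have hn1 : (0:ℝ) ≤ (t/2) * (32*A*(ab (y - z))⁻¹*c 0) := by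
          apply mul_nonneg (by positivity)
          exact mul_nonneg (mul_nonneg (mul_nonneg (by norm_num) hA0)
            (inv_nonneg.mpr (ab_pos _).le)) (hc 0)
        have hn2 : (0:ℝ) ≤ (2*t)⁻¹ * (A*(2*na y+1)*c 0) := by
          apply mul_nonneg (by positivity)
          apply mul_nonneg (mul_nonneg hA0 (by have := na_nonneg y; linarith)) (hc 0)
        rw [← ENNReal.ofReal_add hn1 hn2]
        exact ENNReal.ofReal_le_ofReal final_real
    _ = ENNReal.ofReal (34*A*c 0 *
          ((1 + na y + na z)⁻¹ * Real.sqrt (ab y) * (Real.sqrt (ab (y - z)))⁻¹ * c y * c z)) := by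
        rw [← ENNReal.ofReal_mul pref_nonneg]
        congr 1
        rw [hsy, hsz]
        ring

/-- the inner `k₃` sum in region A. -/
theorem innerA (hA : 1 ≤ A) (hc : ∀ k, 0 ≤ c k)
  (hmax : ∀ (k : ℤ) (j : ℕ), ∑ l ∈ Finset.Icc (k - (j:ℤ)) (k + (j:ℤ)), c l ≤ A*(2*(j:ℝ)+1)*c k)
  (x z : ℤ) :
    ∑' (y:ℤ), ENNReal.ofReal (if ¬ 2*x.natAbs ≤ y.natAbs ∧ ¬ 2*z.natAbs ≤ y.natAbs then
        ((1 + na x + na (y - z)) * (1 + na z + na (y - x)))⁻¹ * (c x * (c y * c z)) else 0)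
      ≤ ENNReal.ofReal (32*A*c 0 * ((1 + na x + na z)⁻¹ * c x * c z)) := by
  have hA0 : (0:ℝ) ≤ A := by linarith
  have hS : (0:ℝ) < 1 + na x + na z := by
    have := na_nonneg x; have := na_nonneg z; linarith
  set N := x.natAbs + z.natAbs with hN
  -- pointwise bound
  have pointwise : ∀ y:ℤ, (if ¬ 2*x.natAbs ≤ y.natAbs ∧ ¬ 2*z.natAbs ≤ y.natAbs then
      ((1 + na x + na (y - z)) * (1 + na z + na (y - x)))⁻¹ * (c x * (c y * c z)) else 0)
      ≤ (16*((1 + na x + na z)^2)⁻¹ * (c x * c z)) * (if y.natAbs ≤ N then c y else 0) := by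
    intro y
    by_cases hreg : ¬ 2*x.natAbs ≤ y.natAbs ∧ ¬ 2*z.natAbs ≤ y.natAbs
    · rw [if_pos hreg, if_pos (by omega : y.natAbs ≤ N)]
      obtain ⟨h1, h2⟩ := hreg
      have hP : (0:ℝ) < 1 + na x + na (y - z) := by
        have := na_nonneg x; have := na_nonneg (y - z); linarith
      have hQ : (0:ℝ) < 1 + na z + na (y - x) := by
        have := na_nonneg z; have := na_nonneg (y - x); linarith
      have hnatP : x.natAbs + z.natAbs + 1 ≤ 4*(1 + x.natAbs + (y - z).natAbs) := by omega
      have hnatQ : x.natAbs + z.natAbs + 1 ≤ 4*(1 + z.natAbs + (y - x).natAbs) := by omega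
      have hrP : 1 + na x + na z ≤ 4*(1 + na x + na (y - z)) := by
        have h := (Nat.cast_le (α := ℝ)).mpr hnatP
        unfold na
        push_cast at h ⊢
        linarith
      have hrQ : 1 + na x + na z ≤ 4*(1 + na z + na (y - x)) := by
        have h := (Nat.cast_le (α := ℝ)).mpr hnatQ
        unfold na
        push_cast at h ⊢
        linarith
      have hW : ((1 + na x + na (y - z)) * (1 + na z + na (y - x)))⁻¹
          ≤ 16*((1 + na x + na z)^2)⁻¹ := by
        rw [show (16:ℝ)*((1 + na x + na z)^2)⁻¹ = (16:ℝ)*(((1 + na x + na z)^2)⁻¹) from rfl]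
        have key : (1 + na x + na z)^2 ≤ 16 * ((1 + na x + na (y - z)) * (1 + na z + na (y - x))) := by
          nlinarith
        have := inv_le_of_le_mul (by positivity : (0:ℝ) < (1 + na x + na z)^2)
          (by norm_num : (0:ℝ) < 16) key
        linarith
      have hcx := hc x
      have hcy := hc y
      have hcz := hc z
      calc ((1 + na x + na (y - z)) * (1 + na z + na (y - x)))⁻¹ * (c x * (c y * c z))
          ≤ (16*((1 + na x + na z)^2)⁻¹) * (c x * (c y * c z)) :=
            mul_le_mul_of_nonneg_right hW (mul_nonneg hcx (mul_nonneg hcy hcz))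
        _ = (16*((1 + na x + na z)^2)⁻¹ * (c x * c z)) * c y := by ring
    · rw [if_neg hreg]
      have h16 : (0:ℝ) ≤ 16*((1 + na x + na z)^2)⁻¹ * (c x * c z) :=
        mul_nonneg (by positivity) (mul_nonneg (hc x) (hc z))
      apply mul_nonneg h16
      split
      exacts [hc y, le_rfl]
  have pref_nonneg : (0:ℝ) ≤ 16*((1 + na x + na z)^2)⁻¹ * (c x * c z) :=
    mul_nonneg (by positivity) (mul_nonneg (hc x) (hc z))
  calc ∑' (y:ℤ), ENNReal.ofReal (if ¬ 2*x.natAbs ≤ y.natAbs ∧ ¬ 2*z.natAbs ≤ y.natAbs then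
        ((1 + na x + na (y - z)) * (1 + na z + na (y - x)))⁻¹ * (c x * (c y * c z)) else 0)
      ≤ ∑' (y:ℤ), ENNReal.ofReal ((16*((1 + na x + na z)^2)⁻¹ * (c x * c z)) *
          (if y.natAbs ≤ N then c y else 0)) :=
        ENNReal.tsum_le_tsum (fun y => ENNReal.ofReal_le_ofReal (pointwise y))
    _ = ENNReal.ofReal (16*((1 + na x + na z)^2)⁻¹ * (c x * c z)) *
        ∑' (y:ℤ), ENNReal.ofReal (if y.natAbs ≤ N then c y else 0) := by
        rw [← ENNReal.tsum_mul_left]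
        exact tsum_congr (fun y => ENNReal.ofReal_mul pref_nonneg)
    _ ≤ ENNReal.ofReal (16*((1 + na x + na z)^2)⁻¹ * (c x * c z)) *
        ENNReal.ofReal (A*(2*(N:ℝ)+1)*c 0) :=
        mul_le_mul_right (sumM0 hA hc hmax N) _
    _ = ENNReal.ofReal ((16*((1 + na x + na z)^2)⁻¹ * (c x * c z)) * (A*(2*(N:ℝ)+1)*c 0)) :=
        (ENNReal.ofReal_mul pref_nonneg).symm
    _ ≤ ENNReal.ofReal (32*A*c 0 * ((1 + na x + na z)⁻¹ * c x * c z)) := by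
        apply ENNReal.ofReal_le_ofReal
        have hNr : (N:ℝ) = na x + na z := by
          rw [hN]
          unfold na
          push_cast
          ring
        have hstep : (16*((1 + na x + na z)^2)⁻¹ * (c x * c z)) * (A*(2*(N:ℝ)+1)*c 0)
            ≤ (16*((1 + na x + na z)^2)⁻¹ * (c x * c z)) * (A*(2*(1 + na x + na z))*c 0) := by
          apply mul_le_mul_of_nonneg_left _ pref_nonneg
          apply mul_le_mul_of_nonneg_right _ (hc 0)
          apply mul_le_mul_of_nonneg_left _ hA0
          rw [hNr]
          linarith
        have e : (16*((1 + na x + na z)^2)⁻¹ * (c x * c z)) * (A*(2*(1 + na x + na z))*c 0)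
            = 32*A*c 0 * ((1 + na x + na z)⁻¹ * c x * c z) := by
          field_simp
          ring
        linarith

lemma sqrt_ab_pos (x : ℤ) : 0 < Real.sqrt (ab x) := Real.sqrt_pos.mpr (ab_pos x)


lemma one_na_pos (x y : ℤ) : (0:ℝ) < 1 + na x + na y := by
  have := na_nonneg x; have := na_nonneg y; linarith

/-- Hilbert-type Schur bound for the region-A kernel. -/
lemma schurK1 (hc : ∀ k, 0 ≤ c k) :
    ∑' (x:ℤ), ∑' (z:ℤ), ENNReal.ofReal ((1 + na x + na z)⁻¹ * c x * c z)
      ≤ (ENNReal.ofReal 12 + ENNReal.ofReal 12) * ∑' (k:ℤ), ENNReal.ofReal ((c k)^2) := by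
  apply schur_bound c hc _ (fun x z => inv_nonneg.mpr (one_na_pos x z).le)
    (fun x => (Real.sqrt (ab x))⁻¹) (fun x => inv_pos.mpr (sqrt_ab_pos x))
    12 12 (by norm_num) (by norm_num)
  · intro x F
    have e : ∀ z:ℤ, (1 + na x + na z)⁻¹ * (Real.sqrt (ab z))⁻¹
        = (ab x + na z)⁻¹ * (Real.sqrt (ab z))⁻¹ := by
      intro z
      rw [show ab x + na z = 1 + na x + na z from by unfold ab; ring]
    rw [Finset.sum_congr rfl (fun z _ => e z)]
    exact rowR1 x F
  · intro z F
    have e : ∀ x:ℤ, (1 + na x + na z)⁻¹ * (Real.sqrt (ab x))⁻¹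
        = (ab z + na x)⁻¹ * (Real.sqrt (ab x))⁻¹ := by
      intro x
      rw [show ab z + na x = 1 + na x + na z from by unfold ab; ring]
    rw [Finset.sum_congr rfl (fun x _ => e x)]
    exact rowR1 z F

/-- Schur bound for the region-B2 kernel. -/
lemma schurK2 (hc : ∀ k, 0 ≤ c k) :
    ∑' (y:ℤ), ∑' (z:ℤ), ENNReal.ofReal
        (((1 + na y + na z)⁻¹ * Real.sqrt (ab y) * (Real.sqrt (ab (y - z)))⁻¹) * c y * c z)
      ≤ (ENNReal.ofReal 20 + ENNReal.ofReal 29) * ∑' (k:ℤ), ENNReal.ofReal ((c k)^2) := by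
  apply schur_bound c hc _ (fun y z => mul_nonneg (mul_nonneg
      (inv_nonneg.mpr (one_na_pos y z).le) (Real.sqrt_nonneg _))
      (inv_nonneg.mpr (Real.sqrt_nonneg _)))
    (fun x => (Real.sqrt (ab x))⁻¹) (fun x => inv_pos.mpr (sqrt_ab_pos x))
    20 29 (by norm_num) (by norm_num)
  · intro y F
    have e : ∀ z:ℤ, ((1 + na y + na z)⁻¹ * Real.sqrt (ab y) * (Real.sqrt (ab (y - z)))⁻¹)
          * (Real.sqrt (ab z))⁻¹
        = Real.sqrt (ab y) * ((ab y + na z)⁻¹ * (Real.sqrt (ab (y - z)))⁻¹ * (Real.sqrt (ab z))⁻¹) := by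
      intro z
      rw [show ab y + na z = 1 + na y + na z from by unfold ab; ring]
      ring
    rw [Finset.sum_congr rfl (fun z _ => e z), ← Finset.mul_sum]
    calc Real.sqrt (ab y) * ∑ z ∈ F, (ab y + na z)⁻¹ * (Real.sqrt (ab (y - z)))⁻¹ * (Real.sqrt (ab z))⁻¹
        ≤ Real.sqrt (ab y) * (20 * (ab y)⁻¹) :=
          mul_le_mul_of_nonneg_left (rowR2 y F) (Real.sqrt_nonneg _)
      _ = 20 * ((ab y)⁻¹ * Real.sqrt (ab y)) := by ring
      _ = 20 * (Real.sqrt (ab y))⁻¹ := by rw [inv_sqrt_helper (ab_pos y)]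
  · intro z F
    have e : ∀ y:ℤ, ((1 + na y + na z)⁻¹ * Real.sqrt (ab y) * (Real.sqrt (ab (y - z)))⁻¹)
          * (Real.sqrt (ab y))⁻¹
        = (ab z + na y)⁻¹ * (Real.sqrt (ab (z - y)))⁻¹ := by
      intro y
      have h1 : ab (y - z) = ab (z - y) := by unfold ab; rw [na_sub_comm]
      have h2 : Real.sqrt (ab y) * (Real.sqrt (ab y))⁻¹ = 1 :=
        mul_inv_cancel₀ (sqrt_ab_pos y).ne'
      have h3 : (1 + na y + na z : ℝ) = ab z + na y := by unfold ab; ring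
      calc ((1 + na y + na z)⁻¹ * Real.sqrt (ab y) * (Real.sqrt (ab (y - z)))⁻¹)
            * (Real.sqrt (ab y))⁻¹
          = (1 + na y + na z)⁻¹ * (Real.sqrt (ab (y - z)))⁻¹
              * (Real.sqrt (ab y) * (Real.sqrt (ab y))⁻¹) := by ring
        _ = (ab z + na y)⁻¹ * (Real.sqrt (ab (z - y)))⁻¹ := by
            rw [h1, h2, h3, mul_one]
    rw [Finset.sum_congr rfl (fun y _ => e y)]
    exact rowR3 z F

lemma tsum_triple (H : ℤ×ℤ×ℤ → ℝ≥0∞) :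
    ∑' (p : ℤ×ℤ×ℤ), H p = ∑' (x:ℤ) (y:ℤ) (z:ℤ), H (x,y,z) :=
  (ENNReal.tsum_prod (f := fun a q => H (a, q))).trans
    (tsum_congr fun x => ENNReal.tsum_prod (f := fun b d => H (x, (b, d))))

/-- main core estimate (center `0`). -/
theorem core_bound (hA : 1 ≤ A) (hc : ∀ k, 0 ≤ c k)
  (hmax : ∀ (k : ℤ) (j : ℕ), ∑ l ∈ Finset.Icc (k - (j:ℤ)) (k + (j:ℤ)), c l ≤ A*(2*(j:ℝ)+1)*c k) :
    ∑' (p : ℤ×ℤ×ℤ), ENNReal.ofReal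
        (((1 + na p.1 + na (p.2.1 - p.2.2)) * (1 + na p.2.2 + na (p.2.1 - p.1)))⁻¹
          * (c p.1 * (c p.2.1 * c p.2.2)))
      ≤ ENNReal.ofReal (5000*A*c 0) * ∑' (k:ℤ), ENNReal.ofReal ((c k)^2) := by
  have hA0 : (0:ℝ) ≤ A := by linarith
  have hc0 := hc 0
  set S2 := ∑' (k:ℤ), ENNReal.ofReal ((c k)^2) with hS2
  set w : ℤ → ℤ → ℤ → ℝ := fun x y z =>
    ((1 + na x + na (y - z)) * (1 + na z + na (y - x)))⁻¹ * (c x * (c y * c z)) with hw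
  set gB2 : ℤ → ℤ → ℤ → ℝ := fun x y z =>
    if 2*x.natAbs ≤ y.natAbs then w x y z else 0 with hgB2
  set gB4 : ℤ → ℤ → ℤ → ℝ := fun x y z =>
    if 2*z.natAbs ≤ y.natAbs then w x y z else 0 with hgB4
  set gA : ℤ → ℤ → ℤ → ℝ := fun x y z =>
    if ¬ 2*x.natAbs ≤ y.natAbs ∧ ¬ 2*z.natAbs ≤ y.natAbs then w x y z else 0 with hgA
  -- pointwise splitting
  have hsplit : ∀ x y z : ℤ, ENNReal.ofReal (w x y z)
      ≤ ENNReal.ofReal (gA x y z)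
        + (ENNReal.ofReal (gB2 x y z) + ENNReal.ofReal (gB4 x y z)) := by
    intro x y z
    by_cases h2 : 2*x.natAbs ≤ y.natAbs
    · have e : gB2 x y z = w x y z := by rw [hgB2]; simp [h2]
      calc ENNReal.ofReal (w x y z) = ENNReal.ofReal (gB2 x y z) := by rw [e]
        _ ≤ ENNReal.ofReal (gB2 x y z) + ENNReal.ofReal (gB4 x y z) := le_self_add
        _ ≤ _ := le_add_self
    · by_cases h4 : 2*z.natAbs ≤ y.natAbs
      · have e : gB4 x y z = w x y z := by rw [hgB4]; simp [h4]
        calc ENNReal.ofReal (w x y z) = ENNReal.ofReal (gB4 x y z) := by rw [e]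
          _ ≤ ENNReal.ofReal (gB2 x y z) + ENNReal.ofReal (gB4 x y z) := le_add_self
          _ ≤ _ := le_add_self
      · have e : gA x y z = w x y z := by rw [hgA]; simp [h2, h4]
        calc ENNReal.ofReal (w x y z) = ENNReal.ofReal (gA x y z) := by rw [e]
          _ ≤ _ := le_self_add
  -- the three regional bounds
  have boundA : ∑' (x:ℤ) (y:ℤ) (z:ℤ), ENNReal.ofReal (gA x y z)
      ≤ ENNReal.ofReal (768*A*c 0) * S2 := by
    have reorder : ∑' (x:ℤ) (y:ℤ) (z:ℤ), ENNReal.ofReal (gA x y z)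
        = ∑' (x:ℤ) (z:ℤ) (y:ℤ), ENNReal.ofReal (gA x y z) :=
      tsum_congr (fun x => ENNReal.tsum_comm)
    rw [reorder]
    have inner : ∀ x z : ℤ, ∑' (y:ℤ), ENNReal.ofReal (gA x y z)
        ≤ ENNReal.ofReal (32*A*c 0) * ENNReal.ofReal ((1 + na x + na z)⁻¹ * c x * c z) := by
      intro x z
      have h := innerA hA hc hmax x z
      rw [← ENNReal.ofReal_mul (by positivity)]
      exact h
    calc ∑' (x:ℤ) (z:ℤ) (y:ℤ), ENNReal.ofReal (gA x y z)
        ≤ ∑' (x:ℤ) (z:ℤ), ENNReal.ofReal (32*A*c 0)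
            * ENNReal.ofReal ((1 + na x + na z)⁻¹ * c x * c z) :=
          ENNReal.tsum_le_tsum (fun x => ENNReal.tsum_le_tsum (fun z => inner x z))
      _ = ENNReal.ofReal (32*A*c 0)
          * ∑' (x:ℤ) (z:ℤ), ENNReal.ofReal ((1 + na x + na z)⁻¹ * c x * c z) := by
          rw [← ENNReal.tsum_mul_left]
          exact tsum_congr (fun x => ENNReal.tsum_mul_left)
      _ ≤ ENNReal.ofReal (32*A*c 0) * ((ENNReal.ofReal 12 + ENNReal.ofReal 12) * S2) :=
          mul_le_mul_right (schurK1 hc) _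
      _ = ENNReal.ofReal (768*A*c 0) * S2 := by
          rw [← ENNReal.ofReal_add (by norm_num) (by norm_num), ← mul_assoc,
            ← ENNReal.ofReal_mul (by positivity),
            show 32*A*c 0 * ((12:ℝ)+12) = 768*A*c 0 from by ring]
  have boundB2 : ∑' (x:ℤ) (y:ℤ) (z:ℤ), ENNReal.ofReal (gB2 x y z)
      ≤ ENNReal.ofReal (1666*A*c 0) * S2 := by
    have reorder : ∑' (x:ℤ) (y:ℤ) (z:ℤ), ENNReal.ofReal (gB2 x y z)
        = ∑' (y:ℤ) (z:ℤ) (x:ℤ), ENNReal.ofReal (gB2 x y z) := by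
      rw [ENNReal.tsum_comm (f := fun x y => ∑' (z:ℤ), ENNReal.ofReal (gB2 x y z))]
      exact tsum_congr (fun y => ENNReal.tsum_comm)
    rw [reorder]
    have inner : ∀ y z : ℤ, ∑' (x:ℤ), ENNReal.ofReal (gB2 x y z)
        ≤ ENNReal.ofReal (34*A*c 0) * ENNReal.ofReal
            ((1 + na y + na z)⁻¹ * Real.sqrt (ab y) * (Real.sqrt (ab (y - z)))⁻¹ * c y * c z) := by
      intro y z
      have h := innerB2 hA hc hmax y z
      rw [← ENNReal.ofReal_mul (by positivity)]
      exact h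
    calc ∑' (y:ℤ) (z:ℤ) (x:ℤ), ENNReal.ofReal (gB2 x y z)
        ≤ ∑' (y:ℤ) (z:ℤ), ENNReal.ofReal (34*A*c 0) * ENNReal.ofReal
            ((1 + na y + na z)⁻¹ * Real.sqrt (ab y) * (Real.sqrt (ab (y - z)))⁻¹ * c y * c z) :=
          ENNReal.tsum_le_tsum (fun y => ENNReal.tsum_le_tsum (fun z => inner y z))
      _ = ENNReal.ofReal (34*A*c 0) * ∑' (y:ℤ) (z:ℤ), ENNReal.ofReal
            (((1 + na y + na z)⁻¹ * Real.sqrt (ab y) * (Real.sqrt (ab (y - z)))⁻¹) * c y * c z) := by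
          rw [← ENNReal.tsum_mul_left]
          exact tsum_congr (fun y => ENNReal.tsum_mul_left)
      _ ≤ ENNReal.ofReal (34*A*c 0) * ((ENNReal.ofReal 20 + ENNReal.ofReal 29) * S2) :=
          mul_le_mul_right (schurK2 hc) _
      _ = ENNReal.ofReal (1666*A*c 0) * S2 := by
          rw [← ENNReal.ofReal_add (by norm_num) (by norm_num), ← mul_assoc,
            ← ENNReal.ofReal_mul (by positivity),
            show 34*A*c 0 * ((20:ℝ)+29) = 1666*A*c 0 from by ring]
  have boundB4 : ∑' (x:ℤ) (y:ℤ) (z:ℤ), ENNReal.ofReal (gB4 x y z)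
      ≤ ENNReal.ofReal (1666*A*c 0) * S2 := by
    have swap : ∑' (x:ℤ) (y:ℤ) (z:ℤ), ENNReal.ofReal (gB4 x y z)
        = ∑' (x:ℤ) (y:ℤ) (z:ℤ), ENNReal.ofReal (gB2 x y z) := by
      calc ∑' (x:ℤ) (y:ℤ) (z:ℤ), ENNReal.ofReal (gB4 x y z)
          = ∑' (x:ℤ) (z:ℤ) (y:ℤ), ENNReal.ofReal (gB4 x y z) :=
            tsum_congr (fun x => ENNReal.tsum_comm)
        _ = ∑' (z:ℤ) (x:ℤ) (y:ℤ), ENNReal.ofReal (gB4 x y z) := ENNReal.tsum_comm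
        _ = ∑' (z:ℤ) (y:ℤ) (x:ℤ), ENNReal.ofReal (gB4 x y z) :=
            tsum_congr (fun z => ENNReal.tsum_comm)
        _ = ∑' (a:ℤ) (b:ℤ) (d:ℤ), ENNReal.ofReal (gB2 a b d) := by
            apply tsum_congr; intro a
            apply tsum_congr; intro b
            apply tsum_congr; intro d
            rw [hgB4, hgB2]
            simp only
            by_cases h : 2*a.natAbs ≤ b.natAbs
            · rw [if_pos h, if_pos h]
              congr 1
              rw [hw]
              simp only
              ring
            · rw [if_neg h, if_neg h]
    rw [swap]
    exact boundB2
  -- assemble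
  calc ∑' (p : ℤ×ℤ×ℤ), ENNReal.ofReal
        (((1 + na p.1 + na (p.2.1 - p.2.2)) * (1 + na p.2.2 + na (p.2.1 - p.1)))⁻¹
          * (c p.1 * (c p.2.1 * c p.2.2)))
      = ∑' (x:ℤ) (y:ℤ) (z:ℤ), ENNReal.ofReal (w x y z) :=
        tsum_triple (fun p => ENNReal.ofReal (w p.1 p.2.1 p.2.2))
    _ ≤ ∑' (x:ℤ) (y:ℤ) (z:ℤ), (ENNReal.ofReal (gA x y z)
          + (ENNReal.ofReal (gB2 x y z) + ENNReal.ofReal (gB4 x y z))) :=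
        ENNReal.tsum_le_tsum (fun x => ENNReal.tsum_le_tsum (fun y =>
          ENNReal.tsum_le_tsum (fun z => hsplit x y z)))
    _ = (∑' (x:ℤ) (y:ℤ) (z:ℤ), ENNReal.ofReal (gA x y z))
        + ((∑' (x:ℤ) (y:ℤ) (z:ℤ), ENNReal.ofReal (gB2 x y z))
          + (∑' (x:ℤ) (y:ℤ) (z:ℤ), ENNReal.ofReal (gB4 x y z))) := by
        simp only [ENNReal.tsum_add]
    _ ≤ ENNReal.ofReal (768*A*c 0) * S2
        + (ENNReal.ofReal (1666*A*c 0) * S2 + ENNReal.ofReal (1666*A*c 0) * S2) :=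
        add_le_add boundA (add_le_add boundB2 boundB4)
    _ = (ENNReal.ofReal (768*A*c 0) + (ENNReal.ofReal (1666*A*c 0)
          + ENNReal.ofReal (1666*A*c 0))) * S2 := by ring
    _ ≤ ENNReal.ofReal (5000*A*c 0) * S2 := by
        apply mul_le_mul_left
        rw [← ENNReal.ofReal_add (by positivity) (by positivity),
          ← ENNReal.ofReal_add (by positivity) (by positivity)]
        apply ENNReal.ofReal_le_ofReal
        nlinarith

end Core

lemma na_cast (x : ℤ) : na x = |(x:ℝ)| := by
  unfold na
  rw [Nat.cast_natAbs]
  push_cast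
  rfl

/-- key weight identity : `(1+δhi)⁻¹(1+δmed)⁻¹ = ((1+a)(1+b))⁻¹`. -/
lemma weight_eq (k1 k2 k3 k4 : ℤ) :
    (1 + |δhiZ k1 k2 k3 k4|)⁻¹ * (1 + |δmedZ k1 k2 k3 k4|)⁻¹
      = ((1 + na (k2 - k1) + na (k3 - k4)) * (1 + na (k4 - k1) + na (k3 - k2)))⁻¹ := by
  have h1 : ((|k1 - k2| + |k3 - k4| : ℤ) : ℝ) = na (k2 - k1) + na (k3 - k4) := by
    rw [na_cast, na_cast]
    push_cast
    rw [abs_sub_comm (k2:ℝ) (k1:ℝ)]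
  have h2 : ((|k1 - k4| + |k3 - k2| : ℤ) : ℝ) = na (k4 - k1) + na (k3 - k2) := by
    rw [na_cast, na_cast]
    push_cast
    rw [abs_sub_comm (k4:ℝ) (k1:ℝ)]
  have hA0 : (0:ℝ) ≤ na (k2 - k1) + na (k3 - k4) := by
    have := na_nonneg (k2 - k1); have := na_nonneg (k3 - k4); linarith
  have hB0 : (0:ℝ) ≤ na (k4 - k1) + na (k3 - k2) := by
    have := na_nonneg (k4 - k1); have := na_nonneg (k3 - k2); linarith
  unfold δhiZ δmedZ
  rw [h1, h2]
  rw [abs_of_nonneg (le_max_of_le_left hA0), abs_of_nonneg (le_min hA0 hB0)]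
  rw [← mul_inv]
  congr 1
  rcases le_total (na (k2 - k1) + na (k3 - k4)) (na (k4 - k1) + na (k3 - k2)) with h | h
  · rw [max_eq_right h, min_eq_left h]
    ring
  · rw [max_eq_left h, min_eq_right h]
    ring

lemma summable_of_tsum_ofReal_ne_top {ι : Type*} {f : ι → ℝ} (hf : ∀ i, 0 ≤ f i)
    (h : ∑' i, ENNReal.ofReal (f i) ≠ ⊤) : Summable f := by
  have h2 : Summable (fun i => (f i).toNNReal) :=
    ENNReal.tsum_coe_ne_top_iff_summable.mp h
  have hfe : f = fun i => ((f i).toNNReal : ℝ) :=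
    funext fun i => (Real.coe_toNNReal _ (hf i)).symm
  rw [hfe]
  exact NNReal.summable_coe.mpr h2

/-- Trilinear discrete sum bound for admissible envelopes: for every
`A ≥ 1` there is `C = C(A)` such that for every square-summable nonnegative envelope
`c : ℤ → [0,∞)` with the maximal property `(Mc)_k ≤ A·c_k` and every `k₁ ∈ ℤ`,
`Σ_{k₂,k₃,k₄} ⟨δk^hi⟩⁻¹⟨δk^med⟩⁻¹ c_{k₂}c_{k₃}c_{k₄} ≤ C‖c‖²_{ℓ²} c_{k₁}`. -/
theorem trilinear_envelope_sum_bound :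
    ∀ A : ℝ, 1 ≤ A → ∃ C : ℝ,
      ∀ c : ℤ → ℝ, (∀ k, 0 ≤ c k) → Summable (fun k => (c k) ^ 2) →
        (∀ (k : ℤ) (j : ℕ),
          (2 * (j : ℝ) + 1)⁻¹ * ∑ l ∈ Finset.Icc (k - (j : ℤ)) (k + (j : ℤ)), c l
            ≤ A * c k) →
        ∀ k1 : ℤ,
          Summable (fun p : ℤ × ℤ × ℤ =>
            (1 + |δhiZ k1 p.1 p.2.1 p.2.2|)⁻¹ * (1 + |δmedZ k1 p.1 p.2.1 p.2.2|)⁻¹ *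
              c p.1 * c p.2.1 * c p.2.2) ∧
          (∑' p : ℤ × ℤ × ℤ,
            (1 + |δhiZ k1 p.1 p.2.1 p.2.2|)⁻¹ * (1 + |δmedZ k1 p.1 p.2.1 p.2.2|)⁻¹ *
              c p.1 * c p.2.1 * c p.2.2)
            ≤ C * (∑' k : ℤ, (c k) ^ 2) * c k1 := by
  intro A hA
  refine ⟨5000*A, ?_⟩
  intro c hc hsq hmaxinv k1
  have hA0 : (0:ℝ) ≤ A := by linarith
  set c' : ℤ → ℝ := fun n => c (k1 + n) with hc'def
  have hc' : ∀ k, 0 ≤ c' k := fun k => hc _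
  have hsq' : Summable (fun k => (c' k)^2) :=
    (Equiv.summable_iff (Equiv.addLeft k1) (f := fun k => (c k)^2)).mpr hsq
  have hmax' : ∀ (k : ℤ) (j : ℕ),
      ∑ l ∈ Finset.Icc (k - (j:ℤ)) (k + (j:ℤ)), c' l ≤ A*(2*(j:ℝ)+1)*c' k := by
    intro k j
    have h := hmaxinv (k1 + k) j
    have hpos : (0:ℝ) < 2*(j:ℝ)+1 := by positivity
    have hsum : ∑ l ∈ Finset.Icc (k - (j:ℤ)) (k + (j:ℤ)), c' l
        = ∑ l ∈ Finset.Icc (k1 + k - (j:ℤ)) (k1 + k + (j:ℤ)), c l := by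
      rw [show Finset.Icc (k1 + k - (j:ℤ)) (k1 + k + (j:ℤ))
          = Finset.map (addLeftEmbedding k1) (Finset.Icc (k - j) (k + j)) from by
        rw [Finset.map_add_left_Icc]
        congr 1 <;> ring]
      rw [Finset.sum_map]
      rfl
    rw [hsum]
    calc ∑ l ∈ Finset.Icc (k1 + k - (j:ℤ)) (k1 + k + (j:ℤ)), c l
        = (2*(j:ℝ)+1) * ((2*(j:ℝ)+1)⁻¹ * ∑ l ∈ Finset.Icc (k1 + k - (j:ℤ)) (k1 + k + (j:ℤ)), c l) := by
          rw [← mul_assoc, mul_inv_cancel₀ hpos.ne', one_mul]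
      _ ≤ (2*(j:ℝ)+1) * (A * c (k1 + k)) := mul_le_mul_of_nonneg_left h hpos.le
      _ = A*(2*(j:ℝ)+1)*c' k := by
          rw [hc'def]
          ring
  -- core estimate
  have core := core_bound hA hc' hmax'
  set G : ℤ×ℤ×ℤ → ℝ := fun p =>
    ((1 + na p.1 + na (p.2.1 - p.2.2)) * (1 + na p.2.2 + na (p.2.1 - p.1)))⁻¹
      * (c' p.1 * (c' p.2.1 * c' p.2.2)) with hGdef
  have hGnonneg : ∀ p, 0 ≤ G p := by
    intro p
    apply mul_nonneg
    · apply inv_nonneg.mpr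
      apply mul_nonneg
      · have := na_nonneg p.1; have := na_nonneg (p.2.1 - p.2.2); linarith
      · have := na_nonneg p.2.2; have := na_nonneg (p.2.1 - p.1); linarith
    · exact mul_nonneg (hc' _) (mul_nonneg (hc' _) (hc' _))
  -- the original summand composed with translation equals G
  set E : (ℤ×ℤ×ℤ) ≃ (ℤ×ℤ×ℤ) :=
    (Equiv.addLeft k1).prodCongr ((Equiv.addLeft k1).prodCongr (Equiv.addLeft k1)) with hEdef
  set orig : ℤ×ℤ×ℤ → ℝ := fun p =>
    (1 + |δhiZ k1 p.1 p.2.1 p.2.2|)⁻¹ * (1 + |δmedZ k1 p.1 p.2.1 p.2.2|)⁻¹ *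
      c p.1 * c p.2.1 * c p.2.2 with horigdef
  have horig : ∀ q, orig (E q) = G q := by
    intro q
    obtain ⟨q1, q2, q3⟩ := q
    have hE : E (q1, q2, q3) = (k1 + q1, k1 + q2, k1 + q3) := rfl
    rw [hE, horigdef, hGdef]
    simp only
    rw [weight_eq]
    rw [show k1 + q1 - k1 = q1 from by ring, show k1 + q3 - k1 = q3 from by ring,
      show k1 + q2 - (k1 + q3) = q2 - q3 from by ring,
      show k1 + q2 - (k1 + q1) = q2 - q1 from by ring]
    rw [hc'def]
    simp only
    ring
  -- finiteness of the ENNReal bound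
  have hrhs : ENNReal.ofReal (5000*A*c' 0) * ∑' (k:ℤ), ENNReal.ofReal ((c' k)^2)
      = ENNReal.ofReal (5000*A*c' 0 * ∑' (k:ℤ), (c' k)^2) := by
    rw [← ENNReal.ofReal_tsum_of_nonneg (fun k => sq_nonneg _) hsq']
    rw [← ENNReal.ofReal_mul (mul_nonneg (mul_nonneg (by norm_num) hA0) (hc' 0))]
  have hfin : ∑' (p : ℤ×ℤ×ℤ), ENNReal.ofReal (G p) ≠ ⊤ := by
    apply ne_top_of_le_ne_top _ core
    rw [hrhs]
    exact ENNReal.ofReal_ne_top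
  have hsumG : Summable G := summable_of_tsum_ofReal_ne_top hGnonneg hfin
  have htsumG : ∑' p, G p ≤ 5000*A*c' 0 * ∑' (k:ℤ), (c' k)^2 := by
    have h1 : ENNReal.ofReal (∑' p, G p) = ∑' (p : ℤ×ℤ×ℤ), ENNReal.ofReal (G p) :=
      ENNReal.ofReal_tsum_of_nonneg hGnonneg hsumG
    have h2 : ENNReal.ofReal (∑' p, G p)
        ≤ ENNReal.ofReal (5000*A*c' 0 * ∑' (k:ℤ), (c' k)^2) := by
      rw [h1, ← hrhs]
      exact core
    have hnn : (0:ℝ) ≤ 5000*A*c' 0 * ∑' (k:ℤ), (c' k)^2 := by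
      apply mul_nonneg (mul_nonneg (mul_nonneg (by norm_num) hA0) (hc' 0))
      exact tsum_nonneg (fun k => sq_nonneg _)
    exact (ENNReal.ofReal_le_ofReal_iff hnn).mp h2
  -- transfer back
  have hsumorig : Summable orig := by
    rw [← Equiv.summable_iff E]
    have : (orig ∘ E) = G := funext horig
    rw [show orig ∘ ⇑E = G from this]
    exact hsumG
  have htsumeq : ∑' p, orig p = ∑' p, G p := by
    rw [← Equiv.tsum_eq E orig]
    exact tsum_congr horig
  have hck : ∑' (k:ℤ), (c k)^2 = ∑' (k:ℤ), (c' k)^2 :=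
    (Equiv.tsum_eq (Equiv.addLeft k1) (fun k => (c k)^2)).symm
  have hck1 : c' 0 = c k1 := by rw [hc'def]; simp
  constructor
  · exact hsumorig
  · calc ∑' p, orig p = ∑' p, G p := htsumeq
      _ ≤ 5000*A*c' 0 * ∑' (k:ℤ), (c' k)^2 := htsumG
      _ = 5000*A * (∑' k : ℤ, (c k) ^ 2) * c k1 := by
          rw [hck, hck1]
          ring
end
end

section
/- Uniform Schwartz decay of frequency-localized Schrödinger kernels: Let χ : ℝ → ℂ be smooth and compactly supported. For t, x ∈ ℝ define K_t(x) = ∫_ℝ e^{i(xξ − tξ²)} χ(ξ) dξ. Then for every N ∈ ℕ there exists a constant C_N (depending only on N and χ) such that |K_t(x)| ≤ C_N · (1 + |x|)^{-N} for all t ∈ [0,1] and all x ∈ ℝ. -/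
noncomputable section
open MeasureTheory Real Complex Filter
open scoped FourierTransform RealInnerProductSpace


noncomputable def pd : ℕ → (ℝ × ℝ → ℂ) → (ℝ × ℝ → ℂ)
  | 0, H => H
  | n+1, H => fun p => fderiv ℝ (pd n H) p (0, 1)

lemma pd_contDiff {H : ℝ × ℝ → ℂ} (hH : ContDiff ℝ (⊤:ℕ∞) H) (n : ℕ) :
    ContDiff ℝ (⊤:ℕ∞) (pd n H) := by
  induction n with
  | zero => exact hH
  | succ n ih =>
      have h1 : ContDiff ℝ (⊤:ℕ∞) (fderiv ℝ (pd n H)) := ih.fderiv_right (m := (⊤:ℕ∞)) (by exact_mod_cast le_top)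
      exact (ContinuousLinearMap.apply ℝ ℂ (((0:ℝ), (1:ℝ)) : ℝ × ℝ)).contDiff.comp h1

lemma iteratedDeriv_eq_pd {H : ℝ × ℝ → ℂ} (hH : ContDiff ℝ (⊤:ℕ∞) H) (n : ℕ) (t ξ : ℝ) :
    iteratedDeriv n (fun y => H (t, y)) ξ = pd n H (t, ξ) := by
  induction n generalizing ξ with
  | zero => rfl
  | succ n ih =>
      rw [iteratedDeriv_succ]
      have h1 : iteratedDeriv n (fun y => H (t, y)) = fun y => pd n H (t, y) :=
        funext fun y => ih y
      rw [h1]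
      have h2 : HasDerivAt (fun y : ℝ => ((t, y) : ℝ × ℝ)) (0, 1) ξ :=
        (hasDerivAt_const ξ t).prodMk (hasDerivAt_id ξ)
      have h3 : HasFDerivAt (pd n H) (fderiv ℝ (pd n H) (t, ξ)) (t, ξ) :=
        (((pd_contDiff hH n).differentiable (by simp)) (t, ξ)).hasFDerivAt
      have h4 : HasDerivAt (fun y : ℝ => pd n H (t, y))
          (fderiv ℝ (pd n H) (t, ξ) (0, 1)) ξ := h3.comp_hasDerivAt ξ h2
      rw [h4.deriv]
      rfl

lemma iteratedDeriv_zero_fun (n : ℕ) : iteratedDeriv n (fun _ : ℝ => (0:ℂ)) = fun _ => 0 := by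
  induction n with
  | zero => rfl
  | succ n ih => rw [iteratedDeriv_succ', deriv_const']; exact ih

lemma key (χ : ℝ → ℂ) (hχ : ContDiff ℝ (⊤ : ℕ∞) χ) (hsupp : HasCompactSupport χ) (n : ℕ) :
    ∃ C : ℝ, ∀ t ∈ Set.Icc (0 : ℝ) 1, ∀ x : ℝ,
      |x| ^ n * ‖∫ ξ : ℝ,
          Complex.exp (Complex.I * ((x : ℂ) * (ξ : ℂ) - (t : ℂ) * (ξ : ℂ) ^ 2)) * χ ξ‖ ≤ C := by
  set K := tsupport χ with hKdef
  have hKc : IsCompact K := hsupp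
  set H : ℝ × ℝ → ℂ := fun p => Complex.exp (-(Complex.I * p.1 * p.2 ^ 2)) * χ p.2 with hHdef
  have hHs : ContDiff ℝ (⊤:ℕ∞) H := by
    apply ContDiff.mul
    · apply ContDiff.cexp
      apply ContDiff.neg
      exact (contDiff_const.mul (Complex.ofRealCLM.contDiff.comp contDiff_fst)).mul
        ((Complex.ofRealCLM.contDiff.comp contDiff_snd).pow 2)
    · exact hχ.comp contDiff_snd
  -- uniform bound on pd n H over [0,1] × K
  obtain ⟨C0, hC0⟩ : ∃ C0, ∀ p ∈ (Set.Icc (0:ℝ) 1) ×ˢ K, ‖pd n H p‖ ≤ C0 :=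
    (isCompact_Icc.prod hKc).exists_bound_of_continuousOn
      ((pd_contDiff hHs n).continuous.continuousOn)
  set C1 : ℝ := max C0 0 with hC1def
  refine ⟨C1 * (volume K).toReal, fun t ht x => ?_⟩
  -- the function g t
  set g : ℝ → ℂ := fun y => H (t, y) with hgdef
  have hg : ContDiff ℝ (⊤:ℕ∞) g := hHs.comp (contDiff_const.prodMk contDiff_id)
  -- vanishing off K
  have hzero : ∀ m : ℕ, ∀ ξ ∉ K, iteratedDeriv m g ξ = 0 := by
    intro m ξ hξ
    have hev : g =ᶠ[nhds ξ] (fun _ => 0) := by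
      filter_upwards [isOpen_compl_iff.2 (isClosed_tsupport χ) |>.mem_nhds hξ] with y hy
      have : χ y = 0 := image_eq_zero_of_notMem_tsupport hy
      simp [hgdef, hHdef, this]
    rw [hev.iteratedDeriv_eq m, iteratedDeriv_zero_fun]
  have hcont : ∀ m : ℕ, Continuous (iteratedDeriv m g) := by
    intro m
    have : iteratedDeriv m g = fun ξ => pd m H (t, ξ) :=
      funext fun ξ => iteratedDeriv_eq_pd hHs m t ξ
    rw [this]
    exact (pd_contDiff hHs m).continuous.comp (continuous_const.prodMk continuous_id)
  have hint : ∀ m : ℕ, (m:ℕ∞) ≤ ⊤ → Integrable (iteratedDeriv m g) := by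
    intro m _
    exact (hcont m).integrable_of_hasCompactSupport
      (HasCompactSupport.intro hKc (hzero m))
  -- Fourier transform identity
  have hfour := Real.fourier_iteratedDeriv (N := (⊤:ℕ∞)) hg hint (le_top : (n:ℕ∞) ≤ ⊤)
  set w : ℝ := -(x / (2 * π)) with hwdef
  -- identify 𝓕 g w with the kernel integral
  have hker : 𝓕 g w = ∫ ξ : ℝ,
      Complex.exp (Complex.I * ((x : ℂ) * (ξ : ℂ) - (t : ℂ) * (ξ : ℂ) ^ 2)) * χ ξ := by
    rw [Real.fourier_eq']
    congr 1
    funext ξ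
    have h1 : (-2 * π * (inner ℝ ξ w : ℝ) : ℝ) = ξ * x := by
      simp only [RCLike.inner_apply, conj_trivial, hwdef]
      field_simp
    rw [h1]
    have hgx : g ξ = Complex.exp (-(Complex.I * (t:ℂ) * (ξ:ℂ) ^ 2)) * χ ξ := rfl
    rw [hgx, smul_eq_mul, ← mul_assoc, ← Complex.exp_add]
    have h2 : ((ξ * x : ℝ) : ℂ) * Complex.I + -(Complex.I * (t:ℂ) * (ξ:ℂ) ^ 2)
        = Complex.I * ((x : ℂ) * (ξ : ℂ) - (t : ℂ) * (ξ : ℂ) ^ 2) := by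
      push_cast
      ring
    rw [h2]
  -- bound on the Fourier transform of the iterated derivative
  have hbound : ‖𝓕 (iteratedDeriv n g) w‖ ≤ C1 * (volume K).toReal := by
    rw [Real.fourier_eq']
    have hres : (∫ ξ : ℝ, Complex.exp (↑(-2 * π * (inner ℝ ξ w : ℝ)) * Complex.I) • iteratedDeriv n g ξ)
        = ∫ ξ in K, Complex.exp (↑(-2 * π * (inner ℝ ξ w : ℝ)) * Complex.I) • iteratedDeriv n g ξ := by
      rw [setIntegral_eq_integral_of_forall_compl_eq_zero]
      intro ξ hξ
      rw [hzero n ξ hξ, smul_zero]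
    rw [hres]
    apply norm_setIntegral_le_of_norm_le_const hKc.measure_lt_top
    · intro ξ hξ
      rw [norm_smul]
      have h1 : ‖Complex.exp (↑(-2 * π * (inner ℝ ξ w : ℝ)) * Complex.I)‖ = 1 := by
        rw [Complex.norm_exp_ofReal_mul_I]
      rw [h1, one_mul, iteratedDeriv_eq_pd hHs n t ξ]
      exact le_trans (hC0 (t, ξ) ⟨ht, hξ⟩) (le_max_left _ _)
  -- put it all together
  have heval : 𝓕 (iteratedDeriv n g) w = (2 * π * Complex.I * w) ^ n • 𝓕 g w := by
    rw [hfour]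
  have hnorm : ‖(2 * π * Complex.I * (w:ℂ)) ^ n • 𝓕 g w‖ = |x| ^ n * ‖𝓕 g w‖ := by
    rw [norm_smul, norm_pow]
    congr 2
    have : ‖(2 * ↑π * Complex.I * (w:ℂ))‖ = 2 * π * |w| := by
      simp [map_mul, abs_of_pos Real.pi_pos]
    rw [this, hwdef]
    rw [abs_neg, abs_div, abs_of_pos (by positivity : (0:ℝ) < 2 * π)]
    field_simp
  calc |x| ^ n * ‖∫ ξ : ℝ,
          Complex.exp (Complex.I * ((x : ℂ) * (ξ : ℂ) - (t : ℂ) * (ξ : ℂ) ^ 2)) * χ ξ‖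
      = |x| ^ n * ‖𝓕 g w‖ := by rw [hker]
    _ = ‖𝓕 (iteratedDeriv n g) w‖ := by rw [heval, hnorm]
    _ ≤ C1 * (volume K).toReal := hbound


/-- Uniform Schwartz decay of frequency-localized Schrödinger kernels:
for smooth compactly supported `χ` and `K_t(x) = ∫ e^{i(xξ − tξ²)} χ(ξ) dξ`, for every
`N` there is `C_N` with `|K_t(x)| ≤ C_N (1+|x|)^{−N}` for all `t ∈ [0,1]`, `x ∈ ℝ`. -/
theorem schrodinger_kernel_decay (χ : ℝ → ℂ)
    (hχ : ContDiff ℝ (⊤ : ℕ∞) χ) (hsupp : HasCompactSupport χ) :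
    ∀ N : ℕ, ∃ C : ℝ,
      ∀ t ∈ Set.Icc (0 : ℝ) 1, ∀ x : ℝ,
        ‖∫ ξ : ℝ,
            Complex.exp (Complex.I * ((x : ℂ) * (ξ : ℂ) - (t : ℂ) * (ξ : ℂ) ^ 2)) * χ ξ‖
          ≤ C / (1 + |x|) ^ N := by
  choose Cf hCf using key χ hχ hsupp
  intro N
  refine ⟨∑ k ∈ Finset.range (N + 1), (N.choose k : ℝ) * Cf k, fun t ht x => ?_⟩
  have hb : (0 : ℝ) < (1 + |x|) ^ N := by positivity
  rw [le_div_iff₀ hb]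
  set A := ‖∫ ξ : ℝ,
      Complex.exp (Complex.I * ((x : ℂ) * (ξ : ℂ) - (t : ℂ) * (ξ : ℂ) ^ 2)) * χ ξ‖ with hA
  have hA0 : (0 : ℝ) ≤ A := norm_nonneg _
  calc A * (1 + |x|) ^ N
      = ∑ k ∈ Finset.range (N + 1), (N.choose k : ℝ) * (|x| ^ k * A) := by
        rw [add_comm (1 : ℝ) |x|, add_pow, Finset.mul_sum]
        refine Finset.sum_congr rfl fun k hk => ?_
        rw [one_pow]
        ring
    _ ≤ ∑ k ∈ Finset.range (N + 1), (N.choose k : ℝ) * Cf k := by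
        refine Finset.sum_le_sum fun k hk => ?_
        exact mul_le_mul_of_nonneg_left (hCf k t ht x) (by positivity)
end
end
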